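/- arXiv:2403.16772 — 9 statements merged into one kernel-verified Lean document; each statement's English description precedes it below -/
import Mathlib

section
/- Average of exponentials, product approximation (Lemma 2.1, first part): There exists an absolute constant C > 0 such that for all τ > 0 and all real α, β with α ≠ 0 and β ≠ 0, |M_τ(e^{isα}) evaluated at the sum minus the product| satisfies |M_τ(e^{is(α+β)}) − M_τ(e^{isα}) · M_τ(e^{isβ})| ≤ C · min{ |α|/|β|, |β|/|α|, τ|α|, τ|β| }. -/
/-- The average `M_τ(e^{isα}) = (1/τ) ∫₀^τ e^{isα} ds` of a complex exponential. -/
noncomputable def avgExp (τ α : ℝ) : ℂ :=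
  (τ : ℂ)⁻¹ * ∫ s in (0 : ℝ)..τ, Complex.exp (Complex.I * (s : ℂ) * (α : ℂ))

namespace AvgAux

noncomputable def G (z : ℂ) : ℂ := (Complex.exp (Complex.I * z) - 1) / (Complex.I * z)

noncomputable def G' (z : ℂ) : ℂ :=
  (Complex.I * Complex.exp (Complex.I * z) * (Complex.I * z) -
    (Complex.exp (Complex.I * z) - 1) * Complex.I) / (Complex.I * z) ^ 2

lemma hasDerivAt_G {z : ℂ} (hz : z ≠ 0) : HasDerivAt G (G' z) z := by
  have h1 : HasDerivAt (fun z : ℂ => Complex.exp (Complex.I * z) - 1)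
      (Complex.I * Complex.exp (Complex.I * z)) z := by
    have := (((hasDerivAt_id z).const_mul Complex.I).cexp).sub_const 1
    simpa [mul_comm] using this
  have h2 : HasDerivAt (fun z : ℂ => Complex.I * z) Complex.I z := by
    simpa using (hasDerivAt_id z).const_mul Complex.I
  have := h1.div h2 (by simp [hz, Complex.I_ne_zero])
  exact this

lemma norm_exp_I (x : ℝ) : ‖Complex.exp (Complex.I * x)‖ = 1 := by
  rw [Complex.norm_exp]
  simp

lemma norm_exp_I' (s γ : ℝ) : ‖Complex.exp (Complex.I * s * γ)‖ = 1 := by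
  rw [Complex.norm_exp]
  simp [Complex.mul_re]

lemma mvt {f f' : ℝ → ℂ} {a b C : ℝ}
    (hd : ∀ t ∈ segment ℝ a b, HasDerivAt f (f' t) t)
    (hb : ∀ t ∈ segment ℝ a b, ‖f' t‖ ≤ C) :
    ‖f b - f a‖ ≤ C * |b - a| := by
  have := (convex_segment a b).norm_image_sub_le_of_norm_hasDerivWithin_le
    (fun t ht => (hd t ht).hasDerivWithinAt) hb (left_mem_segment ℝ a b)
    (right_mem_segment ℝ a b)
  simpa [Real.norm_eq_abs] using this

lemma hasDerivAt_expI (t : ℝ) :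
    HasDerivAt (fun s : ℝ => Complex.exp (Complex.I * s))
      (Complex.I * Complex.exp (Complex.I * t)) t := by
  have h : HasDerivAt (fun z : ℂ => Complex.exp (Complex.I * z))
      (Complex.I * Complex.exp (Complex.I * (t : ℂ))) (t : ℂ) := by
    simpa [mul_comm] using ((hasDerivAt_id (t : ℂ)).const_mul Complex.I).cexp
  exact h.comp_ofReal

lemma exp_sub_one_le (x : ℝ) : ‖Complex.exp (Complex.I * x) - 1‖ ≤ |x| := by
  have := mvt (f := fun s : ℝ => Complex.exp (Complex.I * s))
    (f' := fun s : ℝ => Complex.I * Complex.exp (Complex.I * s)) (a := 0) (b := x) (C := 1)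
    (fun t _ => hasDerivAt_expI t)
    (fun t _ => by rw [norm_mul, norm_exp_I]; simp)
  simpa using this
lemma norm_exp_sub_one_le_two (x : ℝ) : ‖Complex.exp (Complex.I * x) - 1‖ ≤ 2 := by
  calc ‖Complex.exp (Complex.I * x) - 1‖ ≤ ‖Complex.exp (Complex.I * x)‖ + ‖(1 : ℂ)‖ :=
        norm_sub_le _ _
    _ ≤ 2 := by rw [norm_exp_I]; norm_num

lemma norm_Ix (x : ℝ) : ‖Complex.I * (x : ℂ)‖ = |x| := by
  simp [norm_mul]

lemma norm_G_le {x : ℝ} (hx : x ≠ 0) : ‖G (x : ℂ)‖ ≤ 2 / |x| := by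
  rw [G, norm_div, norm_Ix]
  gcongr
  exact norm_exp_sub_one_le_two x

lemma norm_G'_le {x : ℝ} (hx : x ≠ 0) : ‖G' (x : ℂ)‖ ≤ 2 / |x| := by
  have hx' : (0:ℝ) < |x| := abs_pos.mpr hx
  rw [G', norm_div]
  have hden : ‖(Complex.I * (x : ℂ)) ^ 2‖ = |x| ^ 2 := by
    rw [norm_pow, norm_Ix]
  rw [hden]
  have hnum : ‖Complex.I * Complex.exp (Complex.I * x) * (Complex.I * x) -
      (Complex.exp (Complex.I * x) - 1) * Complex.I‖ ≤ 2 * |x| := by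
    calc _ ≤ ‖Complex.I * Complex.exp (Complex.I * x) * (Complex.I * x)‖ +
          ‖(Complex.exp (Complex.I * x) - 1) * Complex.I‖ := norm_sub_le _ _
      _ ≤ |x| + |x| := by
          simp only [norm_mul, Complex.norm_I, norm_exp_I, Complex.norm_real,
            Real.norm_eq_abs, one_mul, mul_one]
          linarith [exp_sub_one_le x]
      _ = 2 * |x| := by ring
  calc _ ≤ (2 * |x|) / |x| ^ 2 := by gcongr
    _ = 2 / |x| := by rw [sq]; field_simp

lemma avgExp_zero {τ : ℝ} (hτ : τ ≠ 0) : avgExp τ 0 = 1 := by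
  have hτ' : (τ : ℂ) ≠ 0 := Complex.ofReal_ne_zero.mpr hτ
  simp [avgExp]
  field_simp

lemma avgExp_eq {τ γ : ℝ} (hτ : τ ≠ 0) (hγ : γ ≠ 0) : avgExp τ γ = G ((τ * γ : ℝ) : ℂ) := by
  have hc : (Complex.I * (γ : ℂ)) ≠ 0 := by
    simp [Complex.I_ne_zero, Complex.ofReal_eq_zero, hγ]
  rw [avgExp,
    show (∫ s in (0:ℝ)..τ, Complex.exp (Complex.I * s * γ)) =
        ∫ s in (0:ℝ)..τ, Complex.exp ((Complex.I * γ) * s) from by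
      congr 1; ext s; ring_nf,
    integral_exp_mul_complex hc, G]
  push_cast
  rw [show Complex.I * ↑γ * ↑τ = Complex.I * (↑τ * ↑γ) from by ring]
  have hτ' : (τ : ℂ) ≠ 0 := Complex.ofReal_ne_zero.mpr hτ
  have hγ' : (γ : ℂ) ≠ 0 := Complex.ofReal_ne_zero.mpr hγ
  field_simp
  ring_nf
  rw [Complex.exp_zero]; ring

lemma integrable_exp (τ γ : ℝ) :
    IntervalIntegrable (fun s : ℝ => Complex.exp (Complex.I * s * γ))
      MeasureTheory.volume 0 τ := by
  apply Continuous.intervalIntegrable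
  continuity

lemma norm_avgExp_le_one {τ : ℝ} (hτ : 0 < τ) (γ : ℝ) : ‖avgExp τ γ‖ ≤ 1 := by
  rw [avgExp, norm_mul]
  have h := intervalIntegral.norm_integral_le_of_norm_le_const (C := 1)
    (f := fun s : ℝ => Complex.exp (Complex.I * s * γ)) (a := 0) (b := τ)
    (fun s _ => by rw [norm_exp_I'])
  have hn : ‖((τ : ℂ))⁻¹‖ = τ⁻¹ := by
    rw [norm_inv, Complex.norm_real, Real.norm_eq_abs, abs_of_pos hτ]
  rw [hn]
  calc τ⁻¹ * ‖∫ s in (0:ℝ)..τ, Complex.exp (Complex.I * s * γ)‖ ≤ τ⁻¹ * (1 * |τ - 0|) := by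
        gcongr
    _ = 1 := by rw [sub_zero, abs_of_pos hτ]; field_simp

lemma shift {τ : ℝ} (hτ : 0 < τ) (α β : ℝ) :
    ‖avgExp τ (α + β) - avgExp τ α‖ ≤ τ * |β| := by
  rw [avgExp, avgExp, ← mul_sub, ← intervalIntegral.integral_sub (integrable_exp τ (α+β))
    (integrable_exp τ α), norm_mul]
  have hb : ∀ s ∈ Set.uIoc (0:ℝ) τ,
      ‖Complex.exp (Complex.I * s * ((α:ℝ)+(β:ℝ) : ℝ)) - Complex.exp (Complex.I * s * α)‖
        ≤ τ * |β| := by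
    intro s hs
    rw [Set.uIoc_of_le hτ.le] at hs
    have key : Complex.exp (Complex.I * s * ((α:ℝ)+(β:ℝ) : ℝ)) - Complex.exp (Complex.I * s * α)
        = Complex.exp (Complex.I * s * α) * (Complex.exp (Complex.I * ((s*β : ℝ) : ℂ)) - 1) := by
      rw [mul_sub, mul_one, ← Complex.exp_add]
      push_cast
      ring_nf
    rw [key, norm_mul, norm_exp_I', one_mul]
    calc ‖Complex.exp (Complex.I * ((s*β : ℝ) : ℂ)) - 1‖ ≤ |s * β| := exp_sub_one_le (s*β)
      _ = |s| * |β| := abs_mul s β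
      _ ≤ τ * |β| := by
          gcongr
          rw [abs_of_pos hs.1]; exact hs.2
  have h := intervalIntegral.norm_integral_le_of_norm_le_const hb
  have hn : ‖((τ : ℂ))⁻¹‖ = τ⁻¹ := by
    rw [norm_inv, Complex.norm_real, Real.norm_eq_abs, abs_of_pos hτ]
  rw [hn]
  calc τ⁻¹ * ‖_‖ ≤ τ⁻¹ * (τ * |β| * |τ - 0|) := by gcongr
    _ = τ * |β| := by rw [sub_zero, abs_of_pos hτ]; field_simp

lemma one_sub_avgExp {τ : ℝ} (hτ : 0 < τ) (γ : ℝ) : ‖1 - avgExp τ γ‖ ≤ τ * |γ| := by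
  have h := shift hτ 0 γ
  rw [zero_add, avgExp_zero hτ.ne', norm_sub_rev] at h
  exact h


lemma norm_avgExp_le_inv {τ : ℝ} (hτ : 0 < τ) {γ : ℝ} (hγ : γ ≠ 0) :
    ‖avgExp τ γ‖ ≤ 2 / (τ * |γ|) := by
  rw [avgExp_eq hτ.ne' hγ]
  have h := norm_G_le (x := τ * γ) (mul_ne_zero hτ.ne' hγ)
  rwa [abs_mul, abs_of_pos hτ] at h

lemma ratio {τ : ℝ} (hτ : 0 < τ) {α β : ℝ} (hα : α ≠ 0) (hβ : β ≠ 0) :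
    ‖avgExp τ (α + β) - avgExp τ α * avgExp τ β‖ ≤ 6 * (|α| / |β|) := by
  have hβ' : (0:ℝ) < |β| := abs_pos.mpr hβ
  have hα' : (0:ℝ) < |α| := abs_pos.mpr hα
  have hdec : avgExp τ (α+β) - avgExp τ α * avgExp τ β
      = (avgExp τ (α+β) - avgExp τ β) + avgExp τ β * (1 - avgExp τ α) := by ring
  by_cases hc : 2 * |α| ≤ |β|
  · have hab : α + β ≠ 0 := by
      intro h
      have hb : β = -α := by linarith
      rw [hb, abs_neg] at hc
      linarith
    have ht2 : ‖avgExp τ β * (1 - avgExp τ α)‖ ≤ 2 * (|α| / |β|) := by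
      rw [norm_mul]
      calc ‖avgExp τ β‖ * ‖1 - avgExp τ α‖ ≤ (2/(τ*|β|)) * (τ*|α|) := by
            apply mul_le_mul (norm_avgExp_le_inv hτ hβ) (one_sub_avgExp hτ α) (norm_nonneg _)
            positivity
        _ = 2 * (|α|/|β|) := by field_simp
    have ht1 : ‖avgExp τ (α+β) - avgExp τ β‖ ≤ 4 * (|α| / |β|) := by
      rw [avgExp_eq hτ.ne' hab, avgExp_eq hτ.ne' hβ]
      have key : ∀ t ∈ segment ℝ (τ*β) (τ*(α+β)), τ * |β| / 2 ≤ |t| := by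
        intro t ht
        rw [segment_eq_uIcc] at ht
        have hd := Real.dist_le_of_mem_uIcc ht (Set.left_mem_uIcc (a := τ*β) (b := τ*(α+β)))
        rw [Real.dist_eq, Real.dist_eq] at hd
        have h1 : |τ*β - τ*(α+β)| = τ * |α| := by
          rw [show τ*β - τ*(α+β) = τ * (-α) from by ring, abs_mul, abs_neg, abs_of_pos hτ]
        rw [h1] at hd
        have h2 : |τ*β| - |t| ≤ |t - (τ*β)| := by
          have := abs_sub_abs_le_abs_sub (τ*β) t
          rw [abs_sub_comm] at this
          linarith
        have h3 : |τ*β| = τ * |β| := by rw [abs_mul, abs_of_pos hτ]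
        nlinarith
      have hm := mvt (f := fun t : ℝ => G (t : ℂ)) (f' := fun t : ℝ => G' (t : ℂ))
        (a := τ*β) (b := τ*(α+β)) (C := 4/(τ*|β|))
        (fun t ht => by
          have ht0 : t ≠ 0 := by
            have := key t ht
            intro h; rw [h, abs_zero] at this; nlinarith
          exact (hasDerivAt_G (Complex.ofReal_ne_zero.mpr ht0)).comp_ofReal)
        (fun t ht => by
          have hk := key t ht
          have ht0 : t ≠ 0 := by intro h; rw [h, abs_zero] at hk; nlinarith
          calc ‖G' (t : ℂ)‖ ≤ 2 / |t| := norm_G'_le ht0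
            _ ≤ 4 / (τ*|β|) := by
                rw [div_le_div_iff₀ (by nlinarith [abs_pos.mpr ht0]) (by positivity)]
                nlinarith)
      have habs : |τ*(α+β) - τ*β| = τ * |α| := by
        rw [show τ*(α+β) - τ*β = τ * α from by ring, abs_mul, abs_of_pos hτ]
      rw [habs] at hm
      calc ‖G ((τ*(α+β) : ℝ) : ℂ) - G ((τ*β : ℝ) : ℂ)‖ ≤ 4/(τ*|β|) * (τ*|α|) := hm
        _ = 4 * (|α|/|β|) := by field_simp
    rw [hdec]
    calc _ ≤ ‖avgExp τ (α+β) - avgExp τ β‖ + ‖avgExp τ β * (1 - avgExp τ α)‖ := norm_add_le _ _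
      _ ≤ 6 * (|α| / |β|) := by linarith
  · push_neg at hc
    have h2 : ‖avgExp τ (α+β) - avgExp τ α * avgExp τ β‖ ≤ 2 := by
      calc _ ≤ ‖avgExp τ (α+β)‖ + ‖avgExp τ α * avgExp τ β‖ := norm_sub_le _ _
        _ ≤ 1 + 1 * 1 := by
            refine add_le_add (norm_avgExp_le_one hτ _) ?_
            rw [norm_mul]
            exact mul_le_mul (norm_avgExp_le_one hτ _) (norm_avgExp_le_one hτ _)
              (norm_nonneg _) zero_le_one
        _ = 2 := by norm_num
    have h3 : (1:ℝ)/2 ≤ |α|/|β| := by rw [div_le_div_iff₀ (by norm_num) hβ']; linarith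
    linarith

lemma taub {τ : ℝ} (hτ : 0 < τ) (α β : ℝ) :
    ‖avgExp τ (α + β) - avgExp τ α * avgExp τ β‖ ≤ 2 * (τ * |β|) := by
  have hdec : avgExp τ (α+β) - avgExp τ α * avgExp τ β
      = (avgExp τ (α+β) - avgExp τ α) + avgExp τ α * (1 - avgExp τ β) := by ring
  rw [hdec]
  calc _ ≤ ‖avgExp τ (α+β) - avgExp τ α‖ + ‖avgExp τ α * (1 - avgExp τ β)‖ := norm_add_le _ _
    _ ≤ τ*|β| + 1 * (τ*|β|) := by
        refine add_le_add (shift hτ α β) ?_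
        rw [norm_mul]
        exact mul_le_mul (norm_avgExp_le_one hτ _) (one_sub_avgExp hτ β) (norm_nonneg _)
          zero_le_one
    _ = 2 * (τ * |β|) := by ring

end AvgAux

/-- Average of exponentials, product approximation (Lemma 2.1, first part):
there is an absolute constant `C > 0` such that for all `τ > 0` and nonzero reals `α`, `β`,
`|M_τ(e^{is(α+β)}) − M_τ(e^{isα}) M_τ(e^{isβ})| ≤ C min{|α|/|β|, |β|/|α|, τ|α|, τ|β|}`. -/
theorem avgExp_product_approx :
    ∃ C > 0, ∀ τ : ℝ, 0 < τ → ∀ α β : ℝ, α ≠ 0 → β ≠ 0 →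
      ‖avgExp τ (α + β) - avgExp τ α * avgExp τ β‖ ≤
        C * min (min (|α| / |β|) (|β| / |α|)) (min (τ * |α|) (τ * |β|)) := by
  refine ⟨6, by norm_num, fun τ hτ α β hα hβ => ?_⟩
  have h1 := AvgAux.ratio hτ hα hβ
  have h2 : ‖avgExp τ (α + β) - avgExp τ α * avgExp τ β‖ ≤ 6 * (|β| / |α|) := by
    have := AvgAux.ratio hτ hβ hα
    rwa [add_comm β α, mul_comm (avgExp τ β)] at this
  have h4 : ‖avgExp τ (α + β) - avgExp τ α * avgExp τ β‖ ≤ 6 * (τ * |β|) := by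
    have := AvgAux.taub hτ α β
    have h0 : (0:ℝ) ≤ τ * |β| := by positivity
    linarith
  have h3 : ‖avgExp τ (α + β) - avgExp τ α * avgExp τ β‖ ≤ 6 * (τ * |α|) := by
    have := AvgAux.taub hτ β α
    rw [add_comm β α, mul_comm (avgExp τ β)] at this
    have h0 : (0:ℝ) ≤ τ * |α| := by positivity
    linarith
  rcases min_choice (min (|α| / |β|) (|β| / |α|)) (min (τ * |α|) (τ * |β|)) with h | h <;>
    rw [h]
  · rcases min_choice (|α| / |β|) (|β| / |α|) with h' | h' <;> rw [h']
    · exact h1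
    · exact h2
  · rcases min_choice (τ * |α|) (τ * |β|) with h' | h' <;> rw [h']
    · exact h3
    · exact h4
end

section
/- Bounds on Picard iterates for a quantitatively well-posed equation (Lemma 2.3, after Tao): Let D and S be complex Banach spaces, k ≥ 2 an integer, and C > 0. Let L : D → S be a linear map with ‖L(f)‖_S ≤ C‖f‖_D for all f ∈ D, and let N : S^k → S be a k-multilinear map with ‖N(u₁,…,u_k)‖_S ≤ C‖u₁‖_S⋯‖u_k‖_S for all u₁,…,u_k ∈ S. Define A₁(f) = L(f) and, for n ≥ 2, A_n(f) = Σ N(A_{n₁}(f),…,A_{n_k}(f)), the sum running over all k-tuples (n₁,…,n_k) of positive integers with n₁+⋯+n_k = n. Then there exists a constant C₁ > 0 such that for all n ≥ 1 and all f, g ∈ D: ‖A_n(f) − A_n(g)‖_S ≤ C₁^n (‖f‖_D + ‖g‖_D)^{n−1} ‖f − g‖_D. -/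
lemma picard_aux_basel (n : ℕ) :
    ∑ v ∈ Finset.Ioc 0 n, (((v : ℝ)) ^ 2)⁻¹ ≤ 2 := by
  have key : ∀ m : ℕ, 1 ≤ m → ∑ v ∈ Finset.Ioc 0 m, (((v : ℝ)) ^ 2)⁻¹ ≤ 2 - (m : ℝ)⁻¹ := by
    intro m hm
    induction m, hm using Nat.le_induction with
    | base => simp; norm_num
    | succ m hm ih =>
      rw [Finset.sum_Ioc_succ_top (Nat.zero_le m)]
      have h1 : (0:ℝ) < m := by exact_mod_cast hm
      have h2 : (0:ℝ) < (m:ℝ) + 1 := by linarith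
      have : (((m:ℝ) + 1) ^ 2)⁻¹ ≤ (m:ℝ)⁻¹ - ((m:ℝ)+1)⁻¹ := by
        rw [inv_eq_one_div, ← one_div, ← one_div]
        rw [div_sub_div _ _ (ne_of_gt h1) (ne_of_gt h2)]
        rw [div_le_div_iff₀ (by positivity) (by positivity)]
        ring_nf
        nlinarith
      push_cast
      linarith
  rcases Nat.eq_zero_or_pos n with h | h
  · subst h; simp
  · have := key n h
    have h1 : (0:ℝ) < (n:ℝ)⁻¹ := by positivity
    linarith

set_option maxHeartbeats 1000000 in
lemma picard_aux_comb (k n : ℕ) (hk : 2 ≤ k) (hn : 1 ≤ n) :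
    ∑ m ∈ (Fintype.piFinset fun _ : Fin k => Finset.range (n + 1)).filter
        (fun m => (∀ i, 1 ≤ m i) ∧ ∑ i, m i = n),
      ∏ i, (((m i : ℝ)) ^ 2)⁻¹ ≤ (k:ℝ)^3 * 2^k / n^2 := by
  classical
  set T := (Fintype.piFinset fun _ : Fin k => Finset.range (n + 1)).filter
      (fun m => (∀ i, 1 ≤ m i) ∧ ∑ i, m i = n) with hT
  set F : (Fin k → ℕ) → ℝ := fun m => ∏ i, (((m i : ℝ)) ^ 2)⁻¹ with hF
  have hFnn : ∀ m, 0 ≤ F m := fun m => Finset.prod_nonneg fun i _ => by positivity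
  have hknn : (0:ℝ) < k := by positivity
  have hnpos : (0:ℝ) < n := by exact_mod_cast hn
  -- every tuple has a big coordinate
  have hbig : ∀ m ∈ T, ∃ i₀ : Fin k, n ≤ k * m i₀ := by
    intro m hm
    rw [hT, Finset.mem_filter] at hm
    obtain ⟨-, h1, h2⟩ := hm
    have : Nonempty (Fin k) := ⟨⟨0, by omega⟩⟩
    obtain ⟨i₀, hi₀⟩ := Finite.exists_max m
    refine ⟨i₀, ?_⟩
    calc n = ∑ i, m i := h2.symm
    _ ≤ Finset.univ.card • m i₀ := Finset.sum_le_card_nsmul _ _ _ (fun i _ => hi₀ i)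
    _ = k * m i₀ := by simp [Finset.card_univ, smul_eq_mul]
  -- split by the big coordinate
  have hsplit : ∑ m ∈ T, F m ≤
      ∑ i₀ : Fin k, ∑ m ∈ T.filter (fun m => n ≤ k * m i₀), F m := by
    have : ∀ m ∈ T, F m ≤ ∑ i₀ : Fin k, (if n ≤ k * m i₀ then F m else 0) := by
      intro m hm
      obtain ⟨i₀, hi₀⟩ := hbig m hm
      have := Finset.single_le_sum (f := fun i₀ : Fin k => (if n ≤ k * m i₀ then F m else 0))
        (fun i _ => by split <;> simp [hFnn m]) (Finset.mem_univ i₀)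
      simpa [hi₀] using this
    calc ∑ m ∈ T, F m ≤ ∑ m ∈ T, ∑ i₀ : Fin k, (if n ≤ k * m i₀ then F m else 0) :=
          Finset.sum_le_sum this
    _ = ∑ i₀ : Fin k, ∑ m ∈ T.filter (fun m => n ≤ k * m i₀), F m := by
          rw [Finset.sum_comm]
          exact Finset.sum_congr rfl fun i₀ _ => (Finset.sum_filter _ _).symm
  -- bound each piece
  have hpiece : ∀ i₀ : Fin k, ∑ m ∈ T.filter (fun m => n ≤ k * m i₀), F m ≤
      (k:ℝ)^2 / n^2 * 2^k := by
    intro i₀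
    set T' := T.filter (fun m => n ≤ k * m i₀) with hT'
    have hstep1 : ∀ m ∈ T', F m ≤ (k:ℝ)^2/n^2 * F (Function.update m i₀ 1) := by
      intro m hm
      rw [hT', Finset.mem_filter] at hm
      obtain ⟨hmT, hbigm⟩ := hm
      rw [hT, Finset.mem_filter] at hmT
      obtain ⟨-, h1, -⟩ := hmT
      have hmi : (1:ℝ) ≤ m i₀ := by exact_mod_cast h1 i₀
      have hbigm' : (n:ℝ) ≤ k * m i₀ := by exact_mod_cast hbigm
      have hup : F (Function.update m i₀ 1) = ∏ i ∈ Finset.univ.erase i₀, (((m i : ℝ)) ^ 2)⁻¹ := by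
        simp only [hF]
        rw [← Finset.mul_prod_erase Finset.univ _ (Finset.mem_univ i₀), Function.update_self]
        simp only [Nat.cast_one, one_pow, inv_one, one_mul]
        exact Finset.prod_congr rfl fun i hi => by
          rw [Function.update_of_ne (Finset.ne_of_mem_erase hi)]
      have hFm : F m = (((m i₀ : ℝ)) ^ 2)⁻¹ * ∏ i ∈ Finset.univ.erase i₀, (((m i : ℝ)) ^ 2)⁻¹ := by
        simp only [hF]
        exact (Finset.mul_prod_erase Finset.univ _ (Finset.mem_univ i₀)).symm
      rw [hFm, hup]
      have hco : (((m i₀ : ℝ)) ^ 2)⁻¹ ≤ (k:ℝ)^2/n^2 := by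
        rw [inv_eq_one_div, div_le_div_iff₀ (by positivity) (by positivity)]
        nlinarith
      exact mul_le_mul_of_nonneg_right hco (Finset.prod_nonneg fun i _ => by positivity)
    calc ∑ m ∈ T', F m ≤ ∑ m ∈ T', (k:ℝ)^2/n^2 * F (Function.update m i₀ 1) :=
          Finset.sum_le_sum hstep1
    _ = (k:ℝ)^2/n^2 * ∑ m ∈ T', F (Function.update m i₀ 1) := by rw [Finset.mul_sum]
    _ ≤ (k:ℝ)^2/n^2 * 2^k := by
        refine mul_le_mul_of_nonneg_left ?_ (by positivity)
        -- image under update is inside piFinset (Ioc 0 n)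
        have hinj : ∀ x ∈ T', ∀ y ∈ T', Function.update x i₀ 1 = Function.update y i₀ 1 → x = y := by
          intro x hx y hy hxy
          rw [hT', Finset.mem_filter] at hx hy
          rw [hT, Finset.mem_filter] at hx hy
          obtain ⟨⟨-, -, hxs⟩, -⟩ := hx
          obtain ⟨⟨-, -, hys⟩, -⟩ := hy
          have hoff : ∀ i, i ≠ i₀ → x i = y i := by
            intro i hi
            have := congrFun hxy i
            rwa [Function.update_of_ne hi, Function.update_of_ne hi] at this
          have hsum : x i₀ + ∑ i ∈ Finset.univ.erase i₀, x i
              = y i₀ + ∑ i ∈ Finset.univ.erase i₀, y i := by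
            rw [Finset.add_sum_erase _ _ (Finset.mem_univ i₀),
              Finset.add_sum_erase _ _ (Finset.mem_univ i₀), hxs, hys]
          have he : ∑ i ∈ Finset.univ.erase i₀, x i = ∑ i ∈ Finset.univ.erase i₀, y i :=
            Finset.sum_congr rfl fun i hi => hoff i (Finset.ne_of_mem_erase hi)
          have : x i₀ = y i₀ := by omega
          funext i
          by_cases h : i = i₀
          · rw [h]; exact this
          · exact hoff i h
        calc ∑ m ∈ T', F (Function.update m i₀ 1)
            = ∑ u ∈ T'.image (fun m => Function.update m i₀ 1), F u :=
              (Finset.sum_image hinj).symm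
        _ ≤ ∑ u ∈ Fintype.piFinset (fun _ : Fin k => Finset.Ioc 0 n), F u := by
              refine Finset.sum_le_sum_of_subset_of_nonneg ?_ (fun u _ _ => hFnn u)
              intro u hu
              rw [Finset.mem_image] at hu
              obtain ⟨m, hm, rfl⟩ := hu
              rw [hT', Finset.mem_filter] at hm
              obtain ⟨hmT, -⟩ := hm
              rw [hT, Finset.mem_filter] at hmT
              obtain ⟨hmp, h1, h2⟩ := hmT
              rw [Fintype.mem_piFinset] at hmp ⊢
              intro i
              rw [Finset.mem_Ioc]
              by_cases h : i = i₀
              · subst h; rw [Function.update_self]; exact ⟨one_pos, hn⟩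
              · rw [Function.update_of_ne h]
                have := hmp i
                rw [Finset.mem_range] at this
                exact ⟨h1 i, by omega⟩
        _ = ∏ i : Fin k, ∑ v ∈ Finset.Ioc 0 n, (((v : ℝ)) ^ 2)⁻¹ := by
              simp only [hF]
              exact (Finset.prod_univ_sum (fun _ : Fin k => Finset.Ioc 0 n)
                (fun _ v => (((v : ℝ)) ^ 2)⁻¹)).symm
        _ ≤ ∏ _i : Fin k, (2:ℝ) := by
              refine Finset.prod_le_prod (fun i _ => ?_) (fun i _ => picard_aux_basel n)
              exact Finset.sum_nonneg fun v _ => by positivity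
        _ = 2^k := by simp
  calc ∑ m ∈ T, F m ≤ ∑ i₀ : Fin k, ∑ m ∈ T.filter (fun m => n ≤ k * m i₀), F m := hsplit
  _ ≤ ∑ _i₀ : Fin k, (k:ℝ)^2/n^2 * 2^k := Finset.sum_le_sum fun i₀ _ => hpiece i₀
  _ = k * ((k:ℝ)^2/n^2 * 2^k) := by simp [Finset.card_univ, mul_comm]
  _ = (k:ℝ)^3 * 2^k / n^2 := by ring


lemma picard_aux_tele {k : ℕ} {S : Type*} [NormedAddCommGroup S] [NormedSpace ℂ S]
    (N : MultilinearMap ℂ (fun _ : Fin k => S) S) (u v : Fin k → S) :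
    N u - N v = ∑ j : Fin k,
      N (Function.update (fun i => if (i : ℕ) < (j : ℕ) then v i else u i) j (u j - v j)) := by
  classical
  set t : ℕ → Fin k → S := fun j i => if (i : ℕ) < j then v i else u i with ht
  have h0 : t 0 = u := by funext i; simp [ht]
  have hkk : t k = v := by funext i; simp [ht, i.isLt]
  have step : ∀ j : Fin k, N (t (j : ℕ)) - N (t ((j : ℕ) + 1)) =
      N (Function.update (t (j : ℕ)) j (u j - v j)) := by
    intro j
    have h1 : t (j : ℕ) = Function.update (t (j : ℕ)) j (u j) := by
      funext i
      by_cases h : i = j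
      · subst h; simp [ht]
      · rw [Function.update_of_ne h]
    have h2 : t ((j : ℕ) + 1) = Function.update (t (j : ℕ)) j (v j) := by
      funext i
      by_cases h : i = j
      · subst h; simp [ht]
      · rw [Function.update_of_ne h]
        have : ((i : ℕ) < (j : ℕ) + 1) ↔ ((i : ℕ) < (j : ℕ)) := by
          constructor
          · intro hh
            rcases Nat.lt_succ_iff_lt_or_eq.mp hh with h' | h'
            · exact h'
            · exact absurd (Fin.ext h') h
          · omega
        simp [ht, this]
    rw [MultilinearMap.map_update_sub, ← h1, ← h2]
  calc N u - N v = N (t 0) - N (t k) := by rw [h0, hkk]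
  _ = ∑ j ∈ Finset.range k, (N (t j) - N (t (j + 1))) := (Finset.sum_range_sub' (fun j => N (t j)) k).symm
  _ = ∑ j : Fin k, (N (t (j:ℕ)) - N (t ((j:ℕ) + 1))) := (Fin.sum_univ_eq_sum_range _ k).symm
  _ = ∑ j : Fin k, N (Function.update (t (j : ℕ)) j (u j - v j)) :=
      Finset.sum_congr rfl fun j _ => step j

set_option maxHeartbeats 1000000 in
/-- Bounds on Picard iterates for a quantitatively well-posed equation (Lemma 2.3,
after Tao): given complex Banach spaces `D`, `S`, a bounded linear map `L : D → S`,
a bounded `k`-multilinear map `N : S^k → S` (with common bound `C`), and the Picard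
iterates `A₁(f) = L f`, `A_n(f) = Σ_{n₁+⋯+n_k=n, nᵢ≥1} N(A_{n₁}(f),…,A_{n_k}(f))` for
`n ≥ 2`, there is `C₁ > 0` with
`‖A_n(f) − A_n(g)‖ ≤ C₁^n (‖f‖+‖g‖)^{n−1} ‖f−g‖` for all `n ≥ 1` and `f, g ∈ D`. -/
theorem picard_iterates_lipschitz_bound
    (D S : Type*) [NormedAddCommGroup D] [NormedSpace ℂ D] [CompleteSpace D]
    [NormedAddCommGroup S] [NormedSpace ℂ S] [CompleteSpace S]
    (k : ℕ) (hk : 2 ≤ k) (C : ℝ) (hC : 0 < C)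
    (L : D →ₗ[ℂ] S) (hL : ∀ f : D, ‖L f‖ ≤ C * ‖f‖)
    (N : MultilinearMap ℂ (fun _ : Fin k => S) S)
    (hN : ∀ u : Fin k → S, ‖N u‖ ≤ C * ∏ i, ‖u i‖)
    (A : ℕ → D → S)
    (hA1 : ∀ f : D, A 1 f = L f)
    (hArec : ∀ n : ℕ, 2 ≤ n → ∀ f : D, A n f =
      ∑ m ∈ (Fintype.piFinset fun _ : Fin k => Finset.range (n + 1)).filter
          (fun m => (∀ i, 1 ≤ m i) ∧ ∑ i, m i = n),
        N (fun i => A (m i) f)) :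
    ∃ C₁ > 0, ∀ n : ℕ, 1 ≤ n → ∀ f g : D,
      ‖A n f - A n g‖ ≤ C₁ ^ n * (‖f‖ + ‖g‖) ^ (n - 1) * ‖f - g‖ := by
  set M : ℝ := max 1 (max C ((k:ℝ)^4 * 2^k * C)) with hM
  have hM1 : 1 ≤ M := le_max_left _ _
  have hMC : C ≤ M := le_trans (le_max_left _ _) (le_max_right _ _)
  have hMk : (k:ℝ)^4 * 2^k * C ≤ M := le_trans (le_max_right _ _) (le_max_right _ _)
  have hM0 : 0 < M := lt_of_lt_of_le one_pos hM1
  -- membership facts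
  have hTmem : ∀ n : ℕ, ∀ m ∈ (Fintype.piFinset fun _ : Fin k => Finset.range (n + 1)).filter
      (fun m => (∀ i, 1 ≤ m i) ∧ ∑ i, m i = n), (∀ i, 1 ≤ m i) ∧ ∑ i, m i = n := by
    intro n m hm
    exact (Finset.mem_filter.mp hm).2
  have hlt : ∀ n : ℕ, ∀ m : Fin k → ℕ, (∀ i, 1 ≤ m i) → (∑ i, m i = n) → ∀ i, m i < n := by
    intro n m h1 h2 i
    set j : Fin k := if (i : ℕ) = 0 then ⟨1, by omega⟩ else ⟨0, by omega⟩ with hj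
    have hij : i ≠ j := by
      intro he
      have he' : (i : ℕ) = (j : ℕ) := by rw [he]
      rw [hj] at he'
      by_cases h0 : (i : ℕ) = 0
      · rw [if_pos h0] at he'; simp at he'; omega
      · rw [if_neg h0] at he'; simp at he'; omega
    have hpair : m i + m j ≤ ∑ i', m i' := by
      have hsub : ({i, j} : Finset (Fin k)) ⊆ Finset.univ := Finset.subset_univ _
      calc m i + m j = ∑ i' ∈ ({i, j} : Finset (Fin k)), m i' := (Finset.sum_pair hij).symm
      _ ≤ ∑ i', m i' := Finset.sum_le_sum_of_subset hsub
    have := h1 j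
    omega
  -- A n 0 = 0
  have hA0 : ∀ n : ℕ, 1 ≤ n → A n (0 : D) = 0 := by
    intro n
    induction n using Nat.strong_induction_on with
    | _ n ih =>
      intro hn
      rcases eq_or_lt_of_le hn with h | h
      · rw [← h, hA1]; exact map_zero L
      · have hn2 : 2 ≤ n := h
        rw [hArec n hn2]
        refine Finset.sum_eq_zero fun m hm => ?_
        obtain ⟨h1, h2⟩ := hTmem n m hm
        have i0 : Fin k := ⟨0, by omega⟩
        refine N.map_coord_zero (⟨0, by omega⟩ : Fin k) ?_
        exact ih _ (hlt n m h1 h2 _) (h1 _)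
  -- the key estimate
  have key : ∀ n : ℕ, 1 ≤ n → ∀ f g : D,
      ‖A n f - A n g‖ ≤ M^(2*n-1) / (n:ℝ)^2 * (‖f‖ + ‖g‖)^(n-1) * ‖f - g‖ := by
    intro n
    induction n using Nat.strong_induction_on with
    | _ n ih =>
      intro hn f g
      rcases eq_or_lt_of_le hn with h | h
      · -- base case n = 1
        rw [← h]
        simp only [Nat.sub_self, pow_zero, mul_one, Nat.cast_one, one_pow, div_one,
          mul_one, pow_one]
        rw [hA1, hA1, ← map_sub]
        calc ‖L (f - g)‖ ≤ C * ‖f - g‖ := hL _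
        _ ≤ M * ‖f - g‖ := mul_le_mul_of_nonneg_right hMC (norm_nonneg _)
        _ = M^(2-1) * ‖f - g‖ := by norm_num
      · have hn2 : 2 ≤ n := h
        set X : ℝ := ‖f‖ + ‖g‖ with hX
        clear_value X
        have hXnn : 0 ≤ X := by rw [hX]; positivity
        have hnR : (1:ℝ) ≤ n := by exact_mod_cast hn
        by_cases hX0 : X = 0
        · have hf : f = 0 := by
            have : ‖f‖ = 0 := by
              have := norm_nonneg f; have := norm_nonneg g
              rw [hX] at hX0; linarith
            exact norm_eq_zero.mp this
          have hg : g = 0 := by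
            have : ‖g‖ = 0 := by
              have := norm_nonneg f; have := norm_nonneg g
              rw [hX] at hX0; linarith
            exact norm_eq_zero.mp this
          subst hf; subst hg
          simp only [sub_self, norm_zero, mul_zero]
          exact le_refl 0
        · have hXpos : 0 < X := lt_of_le_of_ne hXnn (Ne.symm hX0)
          -- norm bound for earlier iterates
          have hnormb : ∀ q : ℕ, 1 ≤ q → q < n → ∀ h : D, ‖h‖ ≤ X →
              ‖A q h‖ ≤ M^(2*q-1) / (q:ℝ)^2 * X^q := by
            intro q hq1 hqn h hh
            have hc : 0 ≤ M^(2*q-1) / (q:ℝ)^2 := by positivity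
            calc ‖A q h‖ = ‖A q h - A q 0‖ := by rw [hA0 q hq1, sub_zero]
            _ ≤ M^(2*q-1) / (q:ℝ)^2 * (‖h‖ + ‖(0:D)‖)^(q-1) * ‖h - 0‖ := ih q hqn hq1 h 0
            _ = M^(2*q-1) / (q:ℝ)^2 * (‖h‖^(q-1) * ‖h‖) := by rw [norm_zero, add_zero, sub_zero, mul_assoc]
            _ = M^(2*q-1) / (q:ℝ)^2 * ‖h‖^q := by
                rw [← pow_succ]
                congr 2
                omega
            _ ≤ M^(2*q-1) / (q:ℝ)^2 * X^q :=
                mul_le_mul_of_nonneg_left (pow_le_pow_left₀ (norm_nonneg _) hh q) hc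
          -- per-tuple estimate
          have htuple : ∀ m ∈ (Fintype.piFinset fun _ : Fin k => Finset.range (n + 1)).filter
              (fun m => (∀ i, 1 ≤ m i) ∧ ∑ i, m i = n),
              ‖N (fun i => A (m i) f) - N (fun i => A (m i) g)‖ ≤
              (k:ℝ) * C * M^(2*n-k) * X^(n-1) * ‖f - g‖ * ∏ i, (((m i : ℝ)) ^ 2)⁻¹ := by
            intro m hm
            obtain ⟨h1, h2⟩ := hTmem n m hm
            have hmlt : ∀ i, m i < n := hlt n m h1 h2
            set u : Fin k → S := fun i => A (m i) f with hu
            set v : Fin k → S := fun i => A (m i) g with hv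
            -- per-slot bound function
            set b : Fin k → Fin k → ℝ := fun j i =>
              M^(2 * m i - 1) * (((m i : ℝ)) ^ 2)⁻¹ * X^(m i) *
                (if i = j then ‖f - g‖ / X else 1) with hb
            have hslot : ∀ j : Fin k,
                ‖N (Function.update (fun i => if (i : ℕ) < (j : ℕ) then v i else u i) j
                  (u j - v j))‖ ≤ C * ∏ i, b j i := by
              intro j
              refine le_trans (hN _) (mul_le_mul_of_nonneg_left ?_ (le_of_lt hC))
              refine Finset.prod_le_prod (fun i _ => norm_nonneg _) fun i _ => ?_
              by_cases hij : i = j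
              · subst hij
                rw [Function.update_self]
                have hihm := ih (m i) (hmlt i) (h1 i) f g
                have heq : M^(2 * m i - 1) / ((m i : ℝ))^2 * X^(m i - 1) * ‖f - g‖ = b i i := by
                  rw [hb]
                  simp only [eq_self_iff_true, if_true]
                  have : X^(m i) = X^(m i - 1) * X := by
                    rw [← pow_succ]
                    congr 1
                    have := h1 i; omega
                  rw [this]
                  rw [show M ^ (2 * m i - 1) * (((m i : ℝ)) ^ 2)⁻¹ * (X ^ (m i - 1) * X) *
                      (‖f - g‖ / X) = M ^ (2 * m i - 1) * (((m i : ℝ)) ^ 2)⁻¹ * X ^ (m i - 1) *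
                      (‖f - g‖ / X * X) from by ring]
                  rw [div_mul_cancel₀ _ hX0]
                  ring
                rw [← heq]
                calc ‖u i - v i‖ ≤ M^(2 * m i - 1) / ((m i : ℝ))^2 * (‖f‖ + ‖g‖)^(m i - 1) * ‖f - g‖ := hihm
                _ = M^(2 * m i - 1) / ((m i : ℝ))^2 * X^(m i - 1) * ‖f - g‖ := by rw [hX]
              · rw [Function.update_of_ne hij]
                have hbv : b j i = M^(2 * m i - 1) * (((m i : ℝ)) ^ 2)⁻¹ * X^(m i) := by
                  rw [hb]; simp [hij]
                rw [hbv]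
                have hdiv : M^(2 * m i - 1) * (((m i : ℝ)) ^ 2)⁻¹ * X^(m i)
                    = M^(2 * m i - 1) / ((m i : ℝ))^2 * X^(m i) := by ring
                rw [hdiv]
                by_cases hlt' : (i : ℕ) < (j : ℕ)
                · simp only [if_pos hlt']
                  exact hnormb (m i) (h1 i) (hmlt i) g (by rw [hX]; linarith [norm_nonneg f])
                · simp only [if_neg hlt']
                  exact hnormb (m i) (h1 i) (hmlt i) f (by rw [hX]; linarith [norm_nonneg g])
            have hprodb : ∀ j : Fin k, ∏ i, b j i =
                M^(2*n-k) * (∏ i, (((m i : ℝ)) ^ 2)⁻¹) * X^(n-1) * ‖f - g‖ := by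
              intro j
              have hsplit : ∏ i, b j i =
                  (∏ i, M^(2 * m i - 1)) * (∏ i, (((m i : ℝ)) ^ 2)⁻¹) * (∏ i, X^(m i)) *
                  (∏ i, (if i = j then ‖f - g‖ / X else 1)) := by
                rw [hb, ← Finset.prod_mul_distrib, ← Finset.prod_mul_distrib,
                  ← Finset.prod_mul_distrib]
              rw [hsplit]
              have e1 : ∏ i, M^(2 * m i - 1) = M^(2*n-k) := by
                rw [Finset.prod_pow_eq_pow_sum]
                congr 1
                have hs : (∑ i, (2 * m i - 1)) + ∑ _i : Fin k, 1 = ∑ i, 2 * m i := by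
                  rw [← Finset.sum_add_distrib]
                  exact Finset.sum_congr rfl fun i _ => by have := h1 i; omega
                have hs2 : ∑ i, 2 * m i = 2 * n := by
                  rw [← Finset.mul_sum, h2]
                have hs3 : ∑ _i : Fin k, (1:ℕ) = k := by simp
                omega
              have e2 : ∏ i, X^(m i) = X^n := by
                rw [Finset.prod_pow_eq_pow_sum, h2]
              have e3 : ∏ i, (if i = j then ‖f - g‖ / X else 1) = ‖f - g‖ / X := by
                rw [Finset.prod_ite_eq' Finset.univ j (fun _ => ‖f - g‖ / X)]
                simp
              rw [e1, e2, e3]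
              have e4 : X^n = X^(n-1) * X := by
                rw [← pow_succ]; congr 1; omega
              rw [e4]
              rw [show M^(2*n-k) * (∏ i, (((m i : ℝ)) ^ 2)⁻¹) * (X^(n-1) * X) * (‖f - g‖ / X)
                  = M^(2*n-k) * (∏ i, (((m i : ℝ)) ^ 2)⁻¹) * X^(n-1) * (‖f - g‖ / X * X)
                  from by ring]
              rw [div_mul_cancel₀ _ hX0]
            calc ‖N u - N v‖
                = ‖∑ j : Fin k, N (Function.update
                    (fun i => if (i : ℕ) < (j : ℕ) then v i else u i) j (u j - v j))‖ := by
                  rw [← picard_aux_tele N u v]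
            _ ≤ ∑ j : Fin k, ‖N (Function.update
                    (fun i => if (i : ℕ) < (j : ℕ) then v i else u i) j (u j - v j))‖ :=
                  norm_sum_le _ _
            _ ≤ ∑ j : Fin k, C * ∏ i, b j i := Finset.sum_le_sum fun j _ => hslot j
            _ = ∑ _j : Fin k, C * (M^(2*n-k) * (∏ i, (((m i : ℝ)) ^ 2)⁻¹) * X^(n-1) * ‖f - g‖) := by
                  exact Finset.sum_congr rfl fun j _ => by rw [hprodb j]
            _ = (k:ℝ) * (C * (M^(2*n-k) * (∏ i, (((m i : ℝ)) ^ 2)⁻¹) * X^(n-1) * ‖f - g‖)) := by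
                  rw [Finset.sum_const, Finset.card_univ, Fintype.card_fin, nsmul_eq_mul]
            _ = (k:ℝ) * C * M^(2*n-k) * X^(n-1) * ‖f - g‖ * ∏ i, (((m i : ℝ)) ^ 2)⁻¹ := by ring
          -- exponent arithmetic
          have hexp : (k:ℝ)^4 * 2^k * C * M^(2*n-k) ≤ M^(2*n-1) := by
            rcases le_or_gt k (2*n) with hkn | hkn
            · calc (k:ℝ)^4 * 2^k * C * M^(2*n-k) ≤ M^(k-1) * M^(2*n-k) := by
                    refine mul_le_mul_of_nonneg_right ?_ (by positivity)
                    exact le_trans hMk (le_self_pow₀ hM1 (by omega))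
              _ = M^(2*n-1) := by rw [← pow_add]; congr 1; omega
            · have : 2*n-k = 0 := by omega
              rw [this, pow_zero, mul_one]
              exact le_trans hMk (le_self_pow₀ hM1 (by omega))
          -- assemble
          rw [hArec n hn2 f, hArec n hn2 g, ← Finset.sum_sub_distrib]
          calc ‖∑ m ∈ (Fintype.piFinset fun _ : Fin k => Finset.range (n + 1)).filter
                (fun m => (∀ i, 1 ≤ m i) ∧ ∑ i, m i = n),
                (N (fun i => A (m i) f) - N (fun i => A (m i) g))‖
              ≤ ∑ m ∈ (Fintype.piFinset fun _ : Fin k => Finset.range (n + 1)).filter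
                (fun m => (∀ i, 1 ≤ m i) ∧ ∑ i, m i = n),
                ‖N (fun i => A (m i) f) - N (fun i => A (m i) g)‖ := norm_sum_le _ _
          _ ≤ ∑ m ∈ (Fintype.piFinset fun _ : Fin k => Finset.range (n + 1)).filter
                (fun m => (∀ i, 1 ≤ m i) ∧ ∑ i, m i = n),
                (k:ℝ) * C * M^(2*n-k) * X^(n-1) * ‖f - g‖ * ∏ i, (((m i : ℝ)) ^ 2)⁻¹ :=
                Finset.sum_le_sum htuple
          _ = (k:ℝ) * C * M^(2*n-k) * X^(n-1) * ‖f - g‖ *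
                ∑ m ∈ (Fintype.piFinset fun _ : Fin k => Finset.range (n + 1)).filter
                (fun m => (∀ i, 1 ≤ m i) ∧ ∑ i, m i = n), ∏ i, (((m i : ℝ)) ^ 2)⁻¹ := by
                rw [Finset.mul_sum]
          _ ≤ (k:ℝ) * C * M^(2*n-k) * X^(n-1) * ‖f - g‖ * ((k:ℝ)^3 * 2^k / n^2) := by
                refine mul_le_mul_of_nonneg_left (picard_aux_comb k n hk hn) ?_
                positivity
          _ ≤ M^(2*n-1) / (n:ℝ)^2 * X^(n-1) * ‖f - g‖ := by
                have hstep : (k:ℝ) * C * M^(2*n-k) * X^(n-1) * ‖f - g‖ * ((k:ℝ)^3 * 2^k / n^2)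
                    = ((k:ℝ)^4 * 2^k * C * M^(2*n-k)) * (X^(n-1) * ‖f - g‖ / (n:ℝ)^2) := by
                  ring
                have hstep2 : M^(2*n-1) / (n:ℝ)^2 * X^(n-1) * ‖f - g‖
                    = M^(2*n-1) * (X^(n-1) * ‖f - g‖ / (n:ℝ)^2) := by ring
                rw [hstep, hstep2]
                exact mul_le_mul_of_nonneg_right hexp (by positivity)
  -- conclude
  refine ⟨M^2, by positivity, fun n hn f g => ?_⟩
  calc ‖A n f - A n g‖ ≤ M^(2*n-1) / (n:ℝ)^2 * (‖f‖ + ‖g‖)^(n-1) * ‖f - g‖ := key n hn f g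
  _ ≤ (M^2)^n * (‖f‖ + ‖g‖)^(n-1) * ‖f - g‖ := by
      refine mul_le_mul_of_nonneg_right (mul_le_mul_of_nonneg_right ?_ (by positivity)) (norm_nonneg _)
      have h1 : M^(2*n-1) / (n:ℝ)^2 ≤ M^(2*n-1) := by
        refine div_le_self (by positivity) ?_
        have : (1:ℝ) ≤ (n:ℝ) := by exact_mod_cast hn
        nlinarith
      have h2 : M^(2*n-1) ≤ M^(2*n) := pow_le_pow_right₀ hM1 (by omega)
      calc M^(2*n-1) / (n:ℝ)^2 ≤ M^(2*n-1) := h1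
      _ ≤ M^(2*n) := h2
      _ = (M^2)^n := by rw [← pow_mul]
end

section
/- Interpolated lower bound on the Schrödinger phase (inequality (phs-3)): For all integers k and k₂ with k² ≠ k₂², one has |k² − k₂²| ≥ |k|^{3/4} · |k − k₂|^{1/4}. -/
/-- Interpolated lower bound on the Schrödinger phase (inequality (phs-3)):
for integers `k`, `k₂` with `k² ≠ k₂²`, one has `|k² − k₂²| ≥ |k|^(3/4) · |k − k₂|^(1/4)`. -/
theorem abs_sq_sub_sq_interp (k k₂ : ℤ) (h : k ^ 2 ≠ k₂ ^ 2) :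
    (|k| : ℝ) ^ ((3 : ℝ) / 4) * (|k - k₂| : ℝ) ^ ((1 : ℝ) / 4) ≤ (|k ^ 2 - k₂ ^ 2| : ℝ) := by
  have hm : k - k₂ ≠ 0 := by
    intro hc
    have hk : k = k₂ := by omega
    exact h (by rw [hk])
  have hp : k + k₂ ≠ 0 := by
    intro hc
    have hk : k = -k₂ := by omega
    exact h (by rw [hk]; ring)
  have ha : 1 ≤ |k - k₂| := Int.one_le_abs hm
  have hb : 1 ≤ |k + k₂| := Int.one_le_abs hp
  have hprod : |k - k₂| * |k + k₂| = |k ^ 2 - k₂ ^ 2| := by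
    rw [← abs_mul]; ring_nf
  have hsum : 2 * |k| ≤ |k - k₂| + |k + k₂| := by
    have h1 := abs_add_le (k - k₂) (k + k₂)
    have h2 : (k - k₂) + (k + k₂) = 2 * k := by ring
    rw [h2, abs_mul] at h1
    simpa using h1
  have hAk : |k| ≤ |k ^ 2 - k₂ ^ 2| := by
    rw [← hprod]; nlinarith [abs_nonneg k]
  have hAd : |k - k₂| ≤ |k ^ 2 - k₂ ^ 2| := by
    rw [← hprod]; nlinarith
  have hA1 : (1 : ℝ) ≤ (|k ^ 2 - k₂ ^ 2| : ℝ) := by exact_mod_cast le_trans ha hAd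
  have hA0 : (0 : ℝ) ≤ (|k ^ 2 - k₂ ^ 2| : ℝ) := by linarith
  have hk : (|k| : ℝ) ≤ (|k ^ 2 - k₂ ^ 2| : ℝ) := by exact_mod_cast hAk
  have hd : (|k - k₂| : ℝ) ≤ (|k ^ 2 - k₂ ^ 2| : ℝ) := by exact_mod_cast hAd
  calc (|k| : ℝ) ^ ((3 : ℝ) / 4) * (|k - k₂| : ℝ) ^ ((1 : ℝ) / 4)
      ≤ (|k ^ 2 - k₂ ^ 2| : ℝ) ^ ((3 : ℝ) / 4) * (|k ^ 2 - k₂ ^ 2| : ℝ) ^ ((1 : ℝ) / 4) := by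
        gcongr <;> first | positivity | exact hk | exact hd
    _ = (|k ^ 2 - k₂ ^ 2| : ℝ) := by
        rw [← Real.rpow_add (by linarith : (0:ℝ) < _)]
        norm_num
end

section
/- Divergence of the second Picard iterate, case p = ∞ (core of Theorem 1.4): For every s ≥ 0 and every positive integer M₀, setting t = (π/2) M₀^{−2}, the series Σ_{k=1}^∞ (1+k²)^{s+3/2} k^{−(4+2s)} |e^{itk²} − 1|² diverges; that is, the function k ↦ (1+k²)^{s+3/2} k^{−(4+2s)} |e^{itk²} − 1|² is not summable over the positive integers. -/
lemma exp_odd_sq (j : ℕ) :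
    Complex.exp (Complex.I * (((Real.pi / 2) * (2 * (j : ℝ) + 1) ^ 2 : ℝ) : ℂ)) = Complex.I := by
  have harg : (Complex.I * (((Real.pi / 2) * (2 * (j : ℝ) + 1) ^ 2 : ℝ) : ℂ))
      = ((j ^ 2 + j : ℕ) : ℂ) * (2 * (Real.pi : ℂ) * Complex.I)
        + ((Real.pi / 2 : ℝ) : ℂ) * Complex.I := by
    push_cast
    ring
  rw [harg, Complex.exp_add]
  have h1 : Complex.exp (((j ^ 2 + j : ℕ) : ℂ) * (2 * (Real.pi : ℂ) * Complex.I)) = 1 := by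
    have h : ((j ^ 2 + j : ℕ) : ℂ) * (2 * (Real.pi : ℂ) * Complex.I)
        = (((j ^ 2 + j : ℕ) : ℤ) : ℂ) * (2 * (Real.pi : ℂ) * Complex.I) := by push_cast; ring
    rw [h, Complex.exp_int_mul_two_pi_mul_I]
  have h2 : Complex.exp (((Real.pi / 2 : ℝ) : ℂ) * Complex.I) = Complex.I := by
    rw [Complex.exp_mul_I, ← Complex.ofReal_cos, ← Complex.ofReal_sin,
      Real.cos_pi_div_two, Real.sin_pi_div_two]
    simp
  rw [h1, h2, one_mul]

/-- Divergence of the second Picard iterate, case `p = ∞` (core of Theorem 1.4):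
for `s ≥ 0` and a positive integer `M₀`, with `t = (π/2) M₀⁻²`, the series
`Σ_{k≥1} (1+k²)^{s+3/2} k^{−(4+2s)} |e^{itk²} − 1|²` diverges. -/
theorem second_iterate_not_summable_p_infty (s : ℝ) (hs : 0 ≤ s) (M₀ : ℕ) (hM : 0 < M₀) :
    ¬ Summable (fun k : ℕ =>
      (1 + ((k : ℝ) + 1) ^ 2) ^ (s + 3 / 2) * ((k : ℝ) + 1) ^ (-(4 + 2 * s)) *
        ‖Complex.exp (Complex.I *
            (((Real.pi / 2) * ((M₀ : ℝ) ^ 2)⁻¹ * ((k : ℝ) + 1) ^ 2 : ℝ) : ℂ)) - 1‖ ^ 2) := by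
  intro hsum
  have hM' : (0:ℝ) < M₀ := by exact_mod_cast hM
  have hg_inj : Function.Injective (fun j : ℕ => M₀ * (2 * j + 1) - 1) := by
    intro a b hab
    simp only at hab
    have ha : 1 ≤ M₀ * (2 * a + 1) := Nat.one_le_iff_ne_zero.2 (by positivity)
    have hb : 1 ≤ M₀ * (2 * b + 1) := Nat.one_le_iff_ne_zero.2 (by positivity)
    have : M₀ * (2 * a + 1) = M₀ * (2 * b + 1) := by omega
    have := Nat.eq_of_mul_eq_mul_left hM this
    omega
  have hsub := hsum.comp_injective hg_inj
  have key : ∀ j : ℕ, (2 / (3 * (M₀:ℝ))) * ((j:ℝ) + 1)⁻¹ ≤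
      ((fun k : ℕ =>
      (1 + ((k : ℝ) + 1) ^ 2) ^ (s + 3 / 2) * ((k : ℝ) + 1) ^ (-(4 + 2 * s)) *
        ‖Complex.exp (Complex.I *
            (((Real.pi / 2) * ((M₀ : ℝ) ^ 2)⁻¹ * ((k : ℝ) + 1) ^ 2 : ℝ) : ℂ)) - 1‖ ^ 2) ∘
        (fun j : ℕ => M₀ * (2 * j + 1) - 1)) j := by
    intro j
    simp only [Function.comp]
    set n : ℕ := M₀ * (2 * j + 1) with hn
    have hn1 : 1 ≤ n := Nat.one_le_iff_ne_zero.2 (by positivity)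
    have hcast : ((n - 1 : ℕ) : ℝ) + 1 = (n : ℝ) := by
      rw [Nat.cast_sub hn1]; ring
    rw [hcast]
    have hnr : (n : ℝ) = (M₀ : ℝ) * (2 * (j:ℝ) + 1) := by
      rw [hn]; push_cast; ring
    have hnpos : (0:ℝ) < n := by rw [hnr]; positivity
    have hargeq : ((Real.pi / 2) * ((M₀ : ℝ) ^ 2)⁻¹ * ((n : ℝ)) ^ 2 : ℝ)
        = (Real.pi / 2) * (2 * (j : ℝ) + 1) ^ 2 := by
      rw [hnr]
      field_simp
    rw [hargeq, exp_odd_sq]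
    have hnorm : ‖Complex.I - 1‖ ^ 2 = 2 := by
      rw [Complex.sq_norm]
      simp [Complex.normSq_apply]
      norm_num
    rw [hnorm]
    have hA : ((n:ℝ) ^ 2) ^ (s + 3 / 2) ≤ (1 + (n:ℝ) ^ 2) ^ (s + 3 / 2) :=
      Real.rpow_le_rpow (by positivity) (by linarith) (by linarith)
    have hB : (0:ℝ) < (n:ℝ) ^ (-(4 + 2 * s)) := Real.rpow_pos_of_pos hnpos _
    have hAB : ((n:ℝ) ^ 2) ^ (s + 3 / 2) * (n:ℝ) ^ (-(4 + 2 * s)) = (n:ℝ)⁻¹ := by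
      rw [← Real.rpow_natCast (n:ℝ) 2, ← Real.rpow_mul hnpos.le, ← Real.rpow_add hnpos]
      rw [show ((2:ℕ):ℝ) * (s + 3/2) + -(4 + 2*s) = (-1:ℝ) by push_cast; ring,
        Real.rpow_neg_one]
    have hstep : (n:ℝ)⁻¹ * 2 ≤ (1 + (n:ℝ) ^ 2) ^ (s + 3 / 2) * (n:ℝ) ^ (-(4 + 2 * s)) * 2 := by
      rw [← hAB]
      have := mul_le_mul_of_nonneg_right (mul_le_mul_of_nonneg_right hA hB.le) (by norm_num : (0:ℝ) ≤ 2)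
      linarith
    refine le_trans ?_ hstep
    have hle : (n:ℝ) ≤ 3 * (M₀:ℝ) * ((j:ℝ) + 1) := by
      rw [hnr]; nlinarith [hM'.le, (Nat.cast_nonneg j : (0:ℝ) ≤ j)]
    rw [div_mul_eq_mul_div, mul_comm ((n:ℝ)⁻¹) 2, ← div_eq_mul_inv, ← div_eq_mul_inv,
      div_div]
    exact div_le_div_of_nonneg_left (by norm_num) hnpos (by rw [mul_comm]; exact hle)
  have hsum2 : Summable (fun j : ℕ => (2 / (3 * (M₀:ℝ))) * ((j:ℝ) + 1)⁻¹) :=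
    hsub.of_nonneg_of_le (fun j => by positivity) key
  rw [summable_mul_left_iff (by positivity : (2 / (3 * (M₀:ℝ))) ≠ 0)] at hsum2
  have : Summable (fun n : ℕ => ((n:ℝ))⁻¹) := by
    rw [← summable_nat_add_iff 1]
    convert hsum2 using 2 with j
    push_cast
    rfl
    push_cast
    ring
  exact Real.not_summable_natCast_inv this
end

section
/- Divergence of the second Picard iterate, case 2 < p < ∞ (core of Theorem 1.4): Let s ≥ 0, 2 < p < ∞, and α with 1/p < α < 1/2. Then for every positive integer M₀, setting t = (π/2) M₀^{−2}, the series Σ_{k=2}^∞ (1+k²)^{s+3/2+1/p} k^{−(4+2s+2/p)} (ln k)^{−2α} |e^{itk²} − 1|² diverges. -/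
open Real

lemma aux_one_le_log {x : ℝ} (hx : 3 ≤ x) : 1 ≤ Real.log x := by
  rw [← Real.log_exp 1]
  apply Real.log_le_log (Real.exp_pos 1)
  linarith [Real.exp_one_lt_d9]

lemma aux_norm_sq {x : ℝ} (hx : Real.cos x = 0) :
    ‖Complex.exp (Complex.I * (x : ℂ)) - 1‖ ^ 2 = 2 := by
  rw [mul_comm, Complex.exp_mul_I, ← Complex.ofReal_cos, ← Complex.ofReal_sin,
    Complex.sq_norm, Complex.normSq_apply]
  simp only [Complex.sub_re, Complex.add_re, Complex.ofReal_re, Complex.mul_re,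
    Complex.I_re, Complex.I_im, Complex.ofReal_im, Complex.one_re,
    Complex.sub_im, Complex.add_im, Complex.mul_im, Complex.one_im]
  nlinarith [Real.sin_sq_add_cos_sq x, hx]

lemma aux_not_summable_F :
    ¬ Summable (fun n : ℕ => ((n : ℝ) * max 1 (Real.log n))⁻¹) := by
  set F : ℕ → ℝ := fun n => ((n : ℝ) * max 1 (Real.log n))⁻¹ with hF
  have h_nonneg : ∀ n, 0 ≤ F n := by
    intro n
    apply inv_nonneg.2
    positivity
  have h_mono : ∀ ⦃m n : ℕ⦄, 0 < m → m ≤ n → F n ≤ F m := by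
    intro m n hm hmn
    apply inv_anti₀
    · have : (1:ℝ) ≤ (m:ℝ) := by exact_mod_cast hm
      nlinarith [le_max_left (1:ℝ) (Real.log m)]
    · apply mul_le_mul (by exact_mod_cast hmn)
        (max_le_max le_rfl (Real.log_le_log (by exact_mod_cast hm) (by exact_mod_cast hmn)))
        (by positivity) (by positivity)
  intro h
  have hcond : Summable fun k : ℕ => (2:ℝ) ^ k * F (2 ^ k) :=
    (summable_condensed_iff_of_nonneg h_nonneg h_mono).2 h
  have hharm : Summable fun k : ℕ => ((k : ℝ) + 1)⁻¹ := by
    refine Summable.of_nonneg_of_le (fun k => by positivity) (fun k => ?_) hcond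
    have h2k : ((2:ℝ)) ^ k ≠ 0 := by positivity
    have hFe : F (2 ^ k) = ((2:ℝ)^k * max 1 ((k:ℝ) * Real.log 2))⁻¹ := by
      simp [hF, Nat.cast_pow, Real.log_pow]
    rw [hFe, mul_inv, ← mul_assoc, mul_inv_cancel₀ h2k, one_mul]
    apply inv_anti₀ (by positivity)
    apply max_le (by linarith [Nat.cast_nonneg (α := ℝ) k])
    nlinarith [Real.log_two_lt_d9, Nat.cast_nonneg (α := ℝ) k]
  have : Summable (fun k : ℕ => ((k:ℝ))⁻¹) := by
    rw [← summable_nat_add_iff 1]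
    simpa using hharm
  exact Real.not_summable_natCast_inv this

lemma aux_not_summable :
    ¬ Summable (fun n : ℕ => (((n : ℝ) + 3) * Real.log ((n : ℝ) + 3))⁻¹) := by
  intro h
  apply aux_not_summable_F
  refine (summable_nat_add_iff 3).1 ?_
  convert h using 2 with n
  case e'_3 => rfl
  have h3 : (3:ℝ) ≤ ((n + 3 : ℕ) : ℝ) := by push_cast; linarith
  rw [max_eq_right (aux_one_le_log h3)]
  push_cast
  ring

/-- Divergence of the second Picard iterate, case `2 < p < ∞` (core of Theorem 1.4):
for `s ≥ 0`, `2 < p < ∞`, `1/p < α < 1/2`, and a positive integer `M₀`, with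
`t = (π/2) M₀⁻²`, the series
`Σ_{k≥2} (1+k²)^{s+3/2+1/p} k^{−(4+2s+2/p)} (ln k)^{−2α} |e^{itk²} − 1|²` diverges. -/
theorem second_iterate_not_summable_p_finite (s p α : ℝ) (hs : 0 ≤ s) (hp : 2 < p)
    (hα1 : 1 / p < α) (hα2 : α < 1 / 2) (M₀ : ℕ) (hM : 0 < M₀) :
    ¬ Summable (fun k : ℕ =>
      (1 + ((k : ℝ) + 2) ^ 2) ^ (s + 3 / 2 + 1 / p) *
        ((k : ℝ) + 2) ^ (-(4 + 2 * s + 2 / p)) *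
        Real.log ((k : ℝ) + 2) ^ (-(2 * α)) *
        ‖Complex.exp (Complex.I *
            (((Real.pi / 2) * ((M₀ : ℝ) ^ 2)⁻¹ * ((k : ℝ) + 2) ^ 2 : ℝ) : ℂ)) - 1‖ ^ 2) := by
  intro hsum
  set q : ℝ := s + 3 / 2 + 1 / p with hq
  have hp0 : (0:ℝ) < p := by linarith
  have hq0 : 0 ≤ q := by
    have : 0 < 1 / p := by positivity
    simp only [hq]; linarith
  have hM1 : (1:ℝ) ≤ (M₀ : ℝ) := by exact_mod_cast hM
  -- the subsequence k = M₀ (2m+3) - 2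
  set g : ℕ → ℕ := fun m => M₀ * (2 * m + 3) - 2 with hg
  have hg3 : ∀ m, 3 ≤ M₀ * (2 * m + 3) := by
    intro m
    calc 3 = 1 * 3 := by ring
    _ ≤ M₀ * (2 * m + 3) := Nat.mul_le_mul hM (by omega)
  have hginj : Function.Injective g := by
    intro a b hab
    simp only [hg] at hab
    have ha := hg3 a; have hb := hg3 b
    have : M₀ * (2 * a + 3) = M₀ * (2 * b + 3) := by omega
    have := Nat.eq_of_mul_eq_mul_left hM this
    omega
  have hcast : ∀ m : ℕ, ((g m : ℝ)) + 2 = (M₀ : ℝ) * (2 * (m:ℝ) + 3) := by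
    intro m
    have h3 := hg3 m
    simp only [hg]
    have : ((M₀ * (2 * m + 3) - 2 : ℕ) : ℝ) = ((M₀ * (2 * m + 3) : ℕ) : ℝ) - 2 := by
      have : (2:ℕ) ≤ M₀ * (2 * m + 3) := by omega
      push_cast [Nat.cast_sub this]
      ring
    rw [this]
    push_cast
    ring
  have hcomp := hsum.comp_injective hginj
  -- constant
  set C : ℝ := 3 * (M₀:ℝ) * (Real.log (3 * (M₀:ℝ)) + 1) with hC
  have hlog3M : 1 ≤ Real.log (3 * (M₀:ℝ)) := aux_one_le_log (by nlinarith)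
  have hCpos : 0 < C := by rw [hC]; nlinarith
  -- lower bound for the subsequence terms
  have key : ∀ m : ℕ,
      C⁻¹ * ((((m:ℝ) + 3)) * Real.log ((m:ℝ) + 3))⁻¹ ≤
      (1 + ((g m : ℝ) + 2) ^ 2) ^ q *
        ((g m : ℝ) + 2) ^ (-(4 + 2 * s + 2 / p)) *
        Real.log ((g m : ℝ) + 2) ^ (-(2 * α)) *
        ‖Complex.exp (Complex.I *
            (((Real.pi / 2) * ((M₀ : ℝ) ^ 2)⁻¹ * ((g m : ℝ) + 2) ^ 2 : ℝ) : ℂ)) - 1‖ ^ 2 := by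
    intro m
    set N : ℝ := (M₀ : ℝ) * (2 * (m:ℝ) + 3) with hN
    rw [hcast m, ← hN]
    have hN3 : 3 ≤ N := by
      rw [hN]; nlinarith [Nat.cast_nonneg (α := ℝ) m]
    have hN0 : 0 < N := by linarith
    have hlogN : 1 ≤ Real.log N := aux_one_le_log hN3
    have hlogN0 : 0 < Real.log N := by linarith
    -- the exponential factor equals 2
    have hcos : Real.cos (Real.pi / 2 * ((M₀:ℝ) ^ 2)⁻¹ * N ^ 2) = 0 := by
      rw [Real.cos_eq_zero_iff]
      refine ⟨2 * (m:ℤ) ^ 2 + 6 * m + 4, ?_⟩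
      have hM0 : ((M₀:ℝ) ^ 2) ≠ 0 := by positivity
      rw [hN]
      push_cast
      field_simp
      ring
    rw [aux_norm_sq hcos]
    -- power comparisons
    have e1 : N ^ (2 * q) ≤ (1 + N ^ 2) ^ q := by
      have h1 : N ^ (2 * q) = ((N ^ 2 : ℝ)) ^ q := by
        rw [← Real.rpow_natCast N 2, ← Real.rpow_mul hN0.le]
        norm_num
      rw [h1]
      exact Real.rpow_le_rpow (by positivity) (by linarith) hq0
    have e2 : (Real.log N)⁻¹ ≤ (Real.log N) ^ (-(2 * α)) := by
      rw [Real.rpow_neg hlogN0.le]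
      apply inv_anti₀ (by positivity)
      calc Real.log N ^ (2 * α) ≤ Real.log N ^ (1:ℝ) :=
            Real.rpow_le_rpow_of_exponent_le hlogN (by linarith)
      _ = Real.log N := Real.rpow_one _
    have e3 : N ^ (2 * q) * N ^ (-(4 + 2 * s + 2 / p)) = N⁻¹ := by
      rw [← Real.rpow_add hN0]
      have : 2 * q + -(4 + 2 * s + 2 / p) = -1 := by rw [hq]; ring
      rw [this, Real.rpow_neg_one]
    have chain : N⁻¹ * (Real.log N)⁻¹ ≤
        (1 + N ^ 2) ^ q * N ^ (-(4 + 2 * s + 2 / p)) * Real.log N ^ (-(2 * α)) * 2 := by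
      calc N⁻¹ * (Real.log N)⁻¹
          = N ^ (2 * q) * N ^ (-(4 + 2 * s + 2 / p)) * (Real.log N)⁻¹ * 1 := by
            rw [e3]; ring
        _ ≤ (1 + N ^ 2) ^ q * N ^ (-(4 + 2 * s + 2 / p)) * Real.log N ^ (-(2 * α)) * 2 := by
            have hb : (0:ℝ) ≤ N ^ (-(4 + 2 * s + 2 / p)) := by positivity
            have hc : (0:ℝ) ≤ (Real.log N)⁻¹ := by positivity
            gcongr
            norm_num
    refine le_trans ?_ chain
    -- compare N log N with C (m+3) log (m+3)
    rw [← mul_inv, ← mul_inv]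
    apply inv_anti₀
    · apply mul_pos hN0 hlogN0
    have hm3 : (3:ℝ) ≤ (m:ℝ) + 3 := by linarith [Nat.cast_nonneg (α := ℝ) m]
    have hlogm : 1 ≤ Real.log ((m:ℝ) + 3) := aux_one_le_log hm3
    have hNle : N ≤ 3 * (M₀:ℝ) * ((m:ℝ) + 3) := by
      rw [hN]; nlinarith [Nat.cast_nonneg (α := ℝ) m]
    have hlogle : Real.log N ≤ (Real.log (3 * (M₀:ℝ)) + 1) * Real.log ((m:ℝ) + 3) := by
      calc Real.log N ≤ Real.log (3 * (M₀:ℝ) * ((m:ℝ) + 3)) :=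
            Real.log_le_log hN0 hNle
      _ = Real.log (3 * (M₀:ℝ)) + Real.log ((m:ℝ) + 3) := by
            rw [Real.log_mul (by positivity) (by positivity)]
      _ ≤ (Real.log (3 * (M₀:ℝ)) + 1) * Real.log ((m:ℝ) + 3) := by nlinarith
    calc N * Real.log N ≤ (3 * (M₀:ℝ) * ((m:ℝ) + 3)) *
          ((Real.log (3 * (M₀:ℝ)) + 1) * Real.log ((m:ℝ) + 3)) := by
          apply mul_le_mul hNle hlogle hlogN0.le (by positivity)
      _ = C * (((m:ℝ) + 3) * Real.log ((m:ℝ) + 3)) := by rw [hC]; ring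
  -- contradiction
  have hsum2 : Summable (fun m : ℕ => C⁻¹ * ((((m:ℝ) + 3)) * Real.log ((m:ℝ) + 3))⁻¹) := by
    refine Summable.of_nonneg_of_le (fun m => ?_) key hcomp
    have hm : (1:ℝ) ≤ (m:ℝ) + 3 := by linarith [Nat.cast_nonneg (α := ℝ) m]
    exact mul_nonneg (inv_nonneg.2 hCpos.le) (inv_nonneg.2 (mul_nonneg (by linarith)
      (Real.log_nonneg hm)))
  have := (summable_mul_left_iff (inv_ne_zero (ne_of_gt hCpos))).1 hsum2
  exact aux_not_summable (by simpa using this)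
end

section
/- Divergence of the second Picard iterate for H^s potentials (core of Theorem 1.5): Let s ≥ 0, γ > 2, and β with 1/2 < β < γ − 3/2. Then for every positive integer M₀, setting t = (π/2) M₀^{−2}, the series Σ_{k=1}^∞ (1+k²)^{s+γ} k^{−(4+2s+2β)} |e^{itk²} − 1|² diverges. -/
/-- Divergence of the second Picard iterate for `H^s` potentials (core of Theorem 1.5):
for `s ≥ 0`, `γ > 2`, `1/2 < β < γ − 3/2`, and a positive integer `M₀`, with
`t = (π/2) M₀⁻²`, the series
`Σ_{k≥1} (1+k²)^{s+γ} k^{−(4+2s+2β)} |e^{itk²} − 1|²` diverges. -/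
theorem second_iterate_not_summable_Hs (s γ β : ℝ) (hs : 0 ≤ s) (hγ : 2 < γ)
    (hβ1 : 1 / 2 < β) (hβ2 : β < γ - 3 / 2) (M₀ : ℕ) (hM : 0 < M₀) :
    ¬ Summable (fun k : ℕ =>
      (1 + ((k : ℝ) + 1) ^ 2) ^ (s + γ) *
        ((k : ℝ) + 1) ^ (-(4 + 2 * s + 2 * β)) *
        ‖Complex.exp (Complex.I *
            (((Real.pi / 2) * ((M₀ : ℝ) ^ 2)⁻¹ * ((k : ℝ) + 1) ^ 2 : ℝ) : ℂ)) - 1‖ ^ 2) := by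
  intro h
  have hM0 : ((M₀ : ℝ)) ≠ 0 := Nat.cast_ne_zero.mpr hM.ne'
  -- the subsequence k + 1 = M₀ * (2m+1)
  set g : ℕ → ℕ := fun m => M₀ * (2 * m + 1) - 1 with hgdef
  have hg1 : ∀ m, g m + 1 = M₀ * (2 * m + 1) := by
    intro m
    have h1 : 1 ≤ M₀ * (2 * m + 1) := Nat.one_le_iff_ne_zero.mpr (by positivity)
    simp only [hgdef]
    omega
  have hginj : Function.Injective g := by
    have : StrictMono g := by
      intro a b hab
      have h1 : M₀ * (2 * a + 1) < M₀ * (2 * b + 1) :=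
        mul_lt_mul_of_pos_left (by omega) hM
      have h2 := hg1 a
      have h3 := hg1 b
      omega
    exact this.injective
  have h2 := h.comp_injective hginj
  have key : ∀ m : ℕ, (3 * (M₀ : ℝ) * ((m : ℝ) + 1))⁻¹ ≤
      (1 + ((g m : ℝ) + 1) ^ 2) ^ (s + γ) *
        ((g m : ℝ) + 1) ^ (-(4 + 2 * s + 2 * β)) *
        ‖Complex.exp (Complex.I *
            (((Real.pi / 2) * ((M₀ : ℝ) ^ 2)⁻¹ * ((g m : ℝ) + 1) ^ 2 : ℝ) : ℂ)) - 1‖ ^ 2 := by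
    intro m
    have hcast : ((g m : ℝ) + 1) = (M₀ : ℝ) * (2 * (m : ℝ) + 1) := by
      have := hg1 m
      have : ((g m + 1 : ℕ) : ℝ) = ((M₀ * (2 * m + 1) : ℕ) : ℝ) := by rw [this]
      push_cast at this
      linarith
    set K : ℝ := (M₀ : ℝ) * (2 * (m : ℝ) + 1) with hK
    have hK1 : 1 ≤ K := by
      have h1 : (1 : ℝ) ≤ (M₀ : ℝ) := by exact_mod_cast hM
      have h2 : (1 : ℝ) ≤ 2 * (m : ℝ) + 1 := by
        have := Nat.cast_nonneg (α := ℝ) m; linarith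
      nlinarith
    have hK0 : 0 < K := lt_of_lt_of_le one_pos hK1
    rw [hcast]
    -- compute the exponential
    have harg : (Real.pi / 2) * ((M₀ : ℝ) ^ 2)⁻¹ * K ^ 2 =
        2 * Real.pi * ((m : ℝ) * ((m : ℝ) + 1)) + Real.pi / 2 := by
      field_simp [hK]
      ring
    have hexp : Complex.exp (Complex.I *
        (((Real.pi / 2) * ((M₀ : ℝ) ^ 2)⁻¹ * K ^ 2 : ℝ) : ℂ)) = Complex.I := by
      rw [harg]
      have : (Complex.I * ((2 * Real.pi * ((m : ℝ) * ((m : ℝ) + 1)) + Real.pi / 2 : ℝ) : ℂ)) =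
          ((m * (m + 1) : ℤ) : ℂ) * (2 * (Real.pi : ℂ) * Complex.I) +
            (Real.pi / 2 : ℝ) * Complex.I := by
        push_cast
        ring
      rw [this, Complex.exp_add, Complex.exp_int_mul_two_pi_mul_I, one_mul,
        Complex.exp_mul_I]
      simp [← Complex.ofReal_cos, ← Complex.ofReal_sin, Real.cos_pi_div_two,
        Real.sin_pi_div_two]
    rw [hexp]
    have hnorm : ‖Complex.I - 1‖ ^ 2 = 2 := by
      rw [Complex.sq_norm]
      simp [Complex.normSq_apply]
      norm_num
    rw [hnorm]
    -- now the rpow estimates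
    have hA : (K ^ 2 : ℝ) ^ (s + γ) ≤ (1 + K ^ 2) ^ (s + γ) :=
      Real.rpow_le_rpow (by positivity) (by linarith) (by linarith)
    have hB : (K ^ 2 : ℝ) ^ (s + γ) * K ^ (-(4 + 2 * s + 2 * β)) =
        K ^ (2 * γ - 2 * β - 4) := by
      rw [← Real.rpow_natCast K 2, ← Real.rpow_mul hK0.le, ← Real.rpow_add hK0]
      norm_num
      ring_nf
    have hC : K ^ (-1 : ℝ) ≤ K ^ (2 * γ - 2 * β - 4) :=
      Real.rpow_le_rpow_of_exponent_le hK1 (by linarith)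
    have hD : (3 * (M₀ : ℝ) * ((m : ℝ) + 1))⁻¹ ≤ K⁻¹ := by
      apply inv_anti₀ hK0
      have h1 : (1 : ℝ) ≤ (M₀ : ℝ) := by exact_mod_cast hM
      nlinarith [Nat.cast_nonneg (α := ℝ) m]
    have hE : K ^ (-(4 + 2 * s + 2 * β)) ≤ (1 + K ^ 2) ^ (s + γ) * K ^ (-(4 + 2 * s + 2 * β)) *
        2 ∨ True := Or.inr trivial
    have hpos : (0 : ℝ) < K ^ (-(4 + 2 * s + 2 * β)) := Real.rpow_pos_of_pos hK0 _
    calc (3 * (M₀ : ℝ) * ((m : ℝ) + 1))⁻¹ ≤ K⁻¹ := hD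
      _ = K ^ (-1 : ℝ) := (Real.rpow_neg_one K).symm
      _ ≤ K ^ (2 * γ - 2 * β - 4) := hC
      _ = (K ^ 2 : ℝ) ^ (s + γ) * K ^ (-(4 + 2 * s + 2 * β)) := hB.symm
      _ ≤ (1 + K ^ 2) ^ (s + γ) * K ^ (-(4 + 2 * s + 2 * β)) :=
          mul_le_mul_of_nonneg_right hA hpos.le
      _ ≤ (1 + K ^ 2) ^ (s + γ) * K ^ (-(4 + 2 * s + 2 * β)) * 2 := by
          nlinarith [Real.rpow_pos_of_pos (show (0:ℝ) < 1 + K ^ 2 by positivity) (s + γ), hpos]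
  have hsum2 : Summable (fun m : ℕ => (3 * (M₀ : ℝ) * ((m : ℝ) + 1))⁻¹) :=
    Summable.of_nonneg_of_le (fun m => by positivity) key h2
  have hsum3 : Summable (fun m : ℕ => ((m : ℝ) + 1)⁻¹) := by
    have := hsum2.mul_left (3 * (M₀ : ℝ))
    have h3 : (3 * (M₀ : ℝ)) ≠ 0 := by positivity
    convert this using 2 with m
    · rfl
    field_simp
  have : Summable (fun n : ℕ => (n : ℝ)⁻¹) := by
    rw [← summable_nat_add_iff 1]
    convert hsum3 using 2 with m
    · rfl
    push_cast
    ring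
  exact Real.not_summable_natCast_inv this
end

section
/- Key bilinear estimate for the low-regularity integrator (estimate (est:Dh)): There exists a constant C > 0 such that for all τ ∈ (0,1], all bounded sequences ξ̂ : ℤ → ℂ, and all h ∈ ℓ²(ℤ;ℂ), setting G_k = ((1/τ)∫₀^τ e^{isk²} ds) · Σ_{k₁+k₂=k} ξ̂_{k₁} ((1/τ)∫₀^τ e^{−isk₂²} ds) h_{k₂} (the sum converging absolutely), one has (Σ_{k∈ℤ} |G_k|²)^{1/2} ≤ C τ^{−1/2} (sup_{k∈ℤ} |ξ̂_k|) (Σ_{k∈ℤ} |h_k|²)^{1/2}. -/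
set_option maxHeartbeats 1000000


lemma norm_exp_I_mul (x α : ℝ) : ‖Complex.exp (Complex.I * (x : ℂ) * (α : ℂ))‖ = 1 := by
  rw [Complex.norm_exp]
  simp

lemma norm_avgExp_le_one {τ : ℝ} (hτ : 0 < τ) (α : ℝ) : ‖avgExp τ α‖ ≤ 1 := by
  have h : ‖∫ s in (0 : ℝ)..τ, Complex.exp (Complex.I * (s : ℂ) * (α : ℂ))‖ ≤ 1 * |τ - 0| := by
    apply intervalIntegral.norm_integral_le_of_norm_le_const
    intro x _
    rw [norm_exp_I_mul]
  rw [avgExp, norm_mul]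
  have h2 : ‖(τ : ℂ)⁻¹‖ = τ⁻¹ := by
    rw [norm_inv, Complex.norm_real, Real.norm_of_nonneg hτ.le]
  rw [h2]
  calc τ⁻¹ * ‖∫ s in (0 : ℝ)..τ, Complex.exp (Complex.I * (s : ℂ) * (α : ℂ))‖
      ≤ τ⁻¹ * (1 * |τ - 0|) := mul_le_mul_of_nonneg_left h (by positivity)
    _ = 1 := by rw [sub_zero, abs_of_pos hτ]; field_simp

lemma norm_avgExp_le_div {τ : ℝ} (hτ : 0 < τ) {α : ℝ} (hα : α ≠ 0) :
    ‖avgExp τ α‖ ≤ 2 / (τ * |α|) := by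
  have hc : (Complex.I * (α : ℂ)) ≠ 0 := by
    simp [Complex.ext_iff, hα]
  have key : (∫ s in (0 : ℝ)..τ, Complex.exp (Complex.I * (s : ℂ) * (α : ℂ)))
      = (Complex.exp ((Complex.I * α) * ((τ:ℝ):ℂ)) - Complex.exp ((Complex.I * α) * ((0:ℝ):ℂ))) / (Complex.I * α) := by
    rw [← integral_exp_mul_complex hc]
    apply intervalIntegral.integral_congr
    intro s _; ring_nf
  have h3 : ‖Complex.I * (α : ℂ)‖ = |α| := by
    rw [norm_mul, Complex.norm_I, one_mul, Complex.norm_real, Real.norm_eq_abs]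
  have hnorm : ‖(Complex.exp ((Complex.I * α) * ((τ:ℝ):ℂ)) - Complex.exp ((Complex.I * α) * ((0:ℝ):ℂ))) / (Complex.I * α)‖ ≤ 2 / |α| := by
    rw [norm_div, h3]
    gcongr
    calc ‖Complex.exp (Complex.I * ↑α * ((τ:ℝ):ℂ)) - Complex.exp (Complex.I * ↑α * ((0:ℝ):ℂ))‖
        ≤ ‖Complex.exp (Complex.I * ↑α * ((τ:ℝ):ℂ))‖ + ‖Complex.exp (Complex.I * ↑α * ((0:ℝ):ℂ))‖ := norm_sub_le _ _
      _ ≤ 2 := by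
          have a1 : ‖Complex.exp (Complex.I * ↑α * ((τ:ℝ):ℂ))‖ = 1 := by
            rw [Complex.norm_exp]; simp
          have a2 : ‖Complex.exp (Complex.I * ↑α * ((0:ℝ):ℂ))‖ = 1 := by
            rw [Complex.norm_exp]; simp
          rw [a1, a2]; norm_num
  rw [avgExp, key, norm_mul]
  have h2 : ‖(τ : ℂ)⁻¹‖ = τ⁻¹ := by
    rw [norm_inv, Complex.norm_real, Real.norm_of_nonneg hτ.le]
  rw [h2]
  calc τ⁻¹ * ‖_ / (Complex.I * ↑α)‖ ≤ τ⁻¹ * (2 / |α|) :=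
        mul_le_mul_of_nonneg_left hnorm (by positivity)
    _ = 2 / (τ * |α|) := by field_simp

lemma sq_norm_avgExp_le {τ : ℝ} (hτ : 0 < τ) (k : ℤ) {α : ℝ} (hα : |α| = (k:ℝ)^2) :
    ‖avgExp τ α‖^2 ≤ 8 / (1 + τ * (k:ℝ)^2) := by
  by_cases hk : (k:ℝ)^2 = 0
  · have h1 : ‖avgExp τ α‖ ≤ 1 := norm_avgExp_le_one hτ α
    have h0 : (0:ℝ) ≤ ‖avgExp τ α‖ := norm_nonneg _
    rw [hk, mul_zero, add_zero, div_one]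
    nlinarith
  · have hx : 0 < τ * (k:ℝ)^2 := by
      have : 0 < (k:ℝ)^2 := lt_of_le_of_ne (sq_nonneg _) (Ne.symm hk)
      positivity
    set x := τ * (k:ℝ)^2 with hxdef
    have hαne : α ≠ 0 := by
      intro h; rw [h] at hα; simp at hα; exact hk hα.symm
    have h2 : ‖avgExp τ α‖ ≤ 2 / x := by
      have := norm_avgExp_le_div hτ hαne
      rwa [hα] at this
    have h1 : ‖avgExp τ α‖ ≤ 1 := norm_avgExp_le_one hτ α
    have h0 : (0:ℝ) ≤ ‖avgExp τ α‖ := norm_nonneg _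
    rcases le_or_gt x 1 with hx1 | hx1
    · have : ‖avgExp τ α‖^2 ≤ 1 := by nlinarith
      have : (1:ℝ) ≤ 8 / (1 + x) := by
        rw [le_div_iff₀ (by linarith)]; linarith
      linarith
    · have hsq : ‖avgExp τ α‖^2 ≤ (2/x)^2 := by nlinarith
      have : (2/x)^2 ≤ 8 / (1 + x) := by
        rw [div_pow, div_le_div_iff₀ (by positivity) (by linarith)]
        nlinarith
      linarith

lemma sum_weight_le {τ : ℝ} (hτ : 0 < τ) (hτ1 : τ ≤ 1) :
    Summable (fun k : ℤ => 8 / (1 + τ * (k:ℝ)^2)) ∧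
    (∑' k : ℤ, 8 / (1 + τ * (k:ℝ)^2)) ≤ 50 / Real.sqrt τ := by
  have hst : 0 < Real.sqrt τ := Real.sqrt_pos.mpr hτ
  have hst1 : Real.sqrt τ ≤ 1 := by
    rw [show (1:ℝ) = Real.sqrt 1 by simp]; exact Real.sqrt_le_sqrt hτ1
  -- integral bound
  have hint : ∀ m : ℕ, (∫ x in (0:ℝ)..(m:ℝ), 8 / (1 + τ * x^2)) ≤ 13 / Real.sqrt τ := by
    intro m
    have hsub : ∀ x : ℝ, 8 / (1 + τ * x^2) = (fun u : ℝ => 8 / (1 + u^2)) (Real.sqrt τ * x) := by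
      intro x
      simp only [mul_pow]
      rw [Real.sq_sqrt hτ.le]
    have : (∫ x in (0:ℝ)..(m:ℝ), 8 / (1 + τ * x^2))
        = (Real.sqrt τ)⁻¹ • ∫ u in (Real.sqrt τ * 0)..(Real.sqrt τ * m), 8 / (1 + u^2) := by
      rw [← intervalIntegral.integral_comp_mul_left (fun u : ℝ => 8 / (1 + u^2)) hst.ne']
      simp_rw [hsub]
    rw [this]
    have harct : (∫ u in (Real.sqrt τ * 0)..(Real.sqrt τ * m), 8 / (1 + u^2)) ≤ 13 := by
      have : (∫ u in (Real.sqrt τ * 0)..(Real.sqrt τ * m), 8 / (1 + u^2))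
          = 8 * (Real.arctan (Real.sqrt τ * m) - Real.arctan (Real.sqrt τ * 0)) := by
        rw [← integral_one_div_one_add_sq]
        rw [← intervalIntegral.integral_const_mul]
        apply intervalIntegral.integral_congr
        intro u _
        simp only
        ring
      rw [this]
      have := Real.arctan_lt_pi_div_two (Real.sqrt τ * m)
      have h2 : Real.arctan (Real.sqrt τ * 0) = 0 := by rw [mul_zero, Real.arctan_zero]
      have hpi : Real.pi < 3.15 := by
        have := Real.pi_lt_d2; linarith
      simp only [mul_zero, Real.arctan_zero] at *
      nlinarith
    rw [smul_eq_mul]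
    calc (Real.sqrt τ)⁻¹ * ∫ u in (Real.sqrt τ * 0)..(Real.sqrt τ * m), 8 / (1 + u^2)
        ≤ (Real.sqrt τ)⁻¹ * 13 := by
          apply mul_le_mul_of_nonneg_left harct (by positivity)
      _ = 13 / Real.sqrt τ := by rw [inv_mul_eq_div]
  -- antitone
  have hanti : ∀ m : ℕ, AntitoneOn (fun x : ℝ => 8 / (1 + τ * x^2)) (Set.Icc (0:ℝ) (0 + m)) := by
    intro m a ha b hb hab
    have h1 : 0 ≤ a := ha.1
    exact div_le_div_of_nonneg_left (by norm_num) (by nlinarith [sq_nonneg a])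
      (by nlinarith [mul_le_mul hab hab h1 (h1.trans hab), hτ.le])
  -- tail partial sums
  have htail : ∀ m : ℕ, (∑ i ∈ Finset.range m, 8 / (1 + τ * ((i:ℝ)+1)^2)) ≤ 13 / Real.sqrt τ := by
    intro m
    have := (hanti m).sum_le_integral (f := fun x : ℝ => 8 / (1 + τ * x^2))
    simp only [zero_add] at this
    refine le_trans ?_ ((this).trans (hint m))
    apply le_of_eq
    apply Finset.sum_congr rfl
    intro i _
    push_cast
    norm_num
  -- full nat partial sums
  have hnat : ∀ m : ℕ, (∑ i ∈ Finset.range m, 8 / (1 + τ * (i:ℝ)^2)) ≤ 21 / Real.sqrt τ := by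
    intro m
    cases m with
    | zero => simp; positivity
    | succ m' =>
      rw [Finset.sum_range_succ']
      have h0 : 8 / (1 + τ * ((0:ℕ):ℝ)^2) ≤ 8 / Real.sqrt τ := by
        simp only [Nat.cast_zero]
        rw [div_le_div_iff₀ (by norm_num) hst]
        nlinarith
      have hsum : (∑ i ∈ Finset.range m', 8 / (1 + τ * ((i+1:ℕ):ℝ)^2)) ≤ 13 / Real.sqrt τ := by
        refine le_trans (le_of_eq ?_) (htail m')
        apply Finset.sum_congr rfl
        intro i _
        push_cast
        ring_nf
      have : (21:ℝ) / Real.sqrt τ = 13 / Real.sqrt τ + 8 / Real.sqrt τ := by ring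
      rw [this]
      exact add_le_add hsum h0
  have hnonneg : ∀ n : ℕ, (0:ℝ) ≤ 8 / (1 + τ * (n:ℝ)^2) := by
    intro n; positivity
  have hsummn : Summable (fun n : ℕ => 8 / (1 + τ * (n:ℝ)^2)) :=
    summable_of_sum_range_le hnonneg hnat
  have htsumn : (∑' n : ℕ, 8 / (1 + τ * (n:ℝ)^2)) ≤ 21 / Real.sqrt τ :=
    Real.tsum_le_of_sum_range_le hnonneg hnat
  -- negative part
  have hnonneg' : ∀ n : ℕ, (0:ℝ) ≤ 8 / (1 + τ * ((n:ℝ)+1)^2) := by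
    intro n; positivity
  have hsummneg : Summable (fun n : ℕ => 8 / (1 + τ * ((n:ℝ)+1)^2)) :=
    summable_of_sum_range_le hnonneg' htail
  have htsumneg : (∑' n : ℕ, 8 / (1 + τ * ((n:ℝ)+1)^2)) ≤ 13 / Real.sqrt τ :=
    Real.tsum_le_of_sum_range_le hnonneg' htail
  -- put together over ℤ
  have e1 : (fun n : ℕ => 8 / (1 + τ * ((((n:ℤ)):ℝ))^2)) = (fun n : ℕ => 8 / (1 + τ * (n:ℝ)^2)) := by
    funext n; push_cast; ring_nf
  have e2 : (fun n : ℕ => 8 / (1 + τ * ((((-((n:ℤ)+1)) : ℤ):ℝ))^2)) = (fun n : ℕ => 8 / (1 + τ * ((n:ℝ)+1)^2)) := by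
    funext n; push_cast; ring_nf
  have hs1 : Summable (fun n : ℕ => 8 / (1 + τ * ((((n:ℤ)):ℝ))^2)) := by rw [e1]; exact hsummn
  have hs2 : Summable (fun n : ℕ => 8 / (1 + τ * ((((-((n:ℤ)+1)) : ℤ):ℝ))^2)) := by rw [e2]; exact hsummneg
  have hsummz : Summable (fun k : ℤ => 8 / (1 + τ * (k:ℝ)^2)) :=
    Summable.of_nat_of_neg_add_one hs1 hs2
  refine ⟨hsummz, ?_⟩
  have heq := tsum_of_nat_of_neg_add_one (f := fun k : ℤ => 8 / (1 + τ * (k:ℝ)^2)) hs1 hs2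
  rw [heq]
  have t1 : (∑' n : ℕ, 8 / (1 + τ * ((((n:ℤ)):ℝ))^2)) ≤ 21 / Real.sqrt τ := by
    rw [e1]; exact htsumn
  have t2 : (∑' n : ℕ, 8 / (1 + τ * ((((-((n:ℤ)+1)) : ℤ):ℝ))^2)) ≤ 13 / Real.sqrt τ := by
    rw [e2]; exact htsumneg
  have h16 : (0:ℝ) ≤ 16 / Real.sqrt τ := by positivity
  have : (50:ℝ) / Real.sqrt τ = 21 / Real.sqrt τ + 13 / Real.sqrt τ + 16 / Real.sqrt τ := by ring
  rw [this]
  linarith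

lemma tsum_cs (a b : ℤ → ℝ) (ha0 : ∀ i, 0 ≤ a i) (hb0 : ∀ i, 0 ≤ b i)
    (ha : Summable (fun i => a i ^ 2)) (hb : Summable (fun i => b i ^ 2)) :
    Summable (fun i => a i * b i) ∧
    (∑' i, a i * b i) ≤ Real.sqrt (∑' i, a i ^ 2) * Real.sqrt (∑' i, b i ^ 2) := by
  have hsum : Summable (fun i => a i * b i) := by
    apply Summable.of_nonneg_of_le (fun i => mul_nonneg (ha0 i) (hb0 i))
      (fun i => ?_) ((ha.add hb).div_const 2)
    nlinarith [sq_nonneg (a i - b i)]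
  refine ⟨hsum, ?_⟩
  set A := Real.sqrt (∑' i, a i ^ 2) with hA
  set Bq := Real.sqrt (∑' i, b i ^ 2) with hB
  have hA0 : 0 ≤ A := Real.sqrt_nonneg _
  have hB0' : 0 ≤ Bq := Real.sqrt_nonneg _
  have hA2 : A ^ 2 = ∑' i, a i ^ 2 := Real.sq_sqrt (tsum_nonneg (fun i => sq_nonneg _))
  have hB2 : Bq ^ 2 = ∑' i, b i ^ 2 := Real.sq_sqrt (tsum_nonneg (fun i => sq_nonneg _))
  rcases eq_or_lt_of_le hA0 with hAz | hApos
  · -- A = 0 : all a i = 0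
    have hta : (∑' i, a i ^ 2) = 0 := by rw [← hA2, ← hAz]; norm_num
    have hza : ∀ i, a i = 0 := by
      intro i
      have h1 : a i ^ 2 ≤ ∑' i, a i ^ 2 := Summable.le_tsum ha i (fun j _ => sq_nonneg _)
      rw [hta] at h1
      have := sq_nonneg (a i)
      nlinarith [ha0 i]
    have : (∑' i, a i * b i) = 0 := by
      convert tsum_zero with i
      rw [hza i, zero_mul]
    rw [this]
    positivity
  rcases eq_or_lt_of_le hB0' with hBz | hBpos
  · have htb : (∑' i, b i ^ 2) = 0 := by rw [← hB2, ← hBz]; norm_num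
    have hzb : ∀ i, b i = 0 := by
      intro i
      have h1 : b i ^ 2 ≤ ∑' i, b i ^ 2 := Summable.le_tsum hb i (fun j _ => sq_nonneg _)
      rw [htb] at h1
      nlinarith [hb0 i]
    have : (∑' i, a i * b i) = 0 := by
      convert tsum_zero with i
      rw [hzb i, mul_zero]
    rw [this]
    positivity
  -- main case
  have key : ∀ i, A * Bq * (a i * b i) ≤ (Bq^2 * a i ^2 + A^2 * b i ^2)/2 := by
    intro i
    nlinarith [sq_nonneg (Bq * a i - A * b i)]
  have hs1 : Summable (fun i => A * Bq * (a i * b i)) := hsum.mul_left _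
  have hs2 : Summable (fun i => (Bq^2 * a i ^2 + A^2 * b i ^2)/2) :=
    (((ha.mul_left (Bq^2)).add (hb.mul_left (A^2)))).div_const 2
  have hle := Summable.tsum_le_tsum key hs1 hs2
  rw [tsum_mul_left] at hle
  have hrhs : (∑' i, (Bq^2 * a i ^2 + A^2 * b i ^2)/2) = A^2 * Bq^2 := by
    rw [tsum_div_const, Summable.tsum_add (ha.mul_left _) (hb.mul_left _), tsum_mul_left, tsum_mul_left,
      ← hA2, ← hB2]
    ring
  rw [hrhs] at hle
  have : A * Bq * (∑' i, a i * b i) ≤ A * Bq * (A * Bq) := by nlinarith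
  exact le_of_mul_le_mul_left this (mul_pos hApos hBpos)

/-- Key bilinear estimate for the low-regularity integrator (estimate (est:Dh)):
there is `C > 0` such that for all `τ ∈ (0,1]`, all bounded sequences `ξ̂ : ℤ → ℂ`
(with bound `B`), and all `h ∈ ℓ²(ℤ;ℂ)`, the sequence
`G_k = M_τ(e^{isk²}) Σ_{k₁+k₂=k} ξ̂_{k₁} M_τ(e^{−isk₂²}) h_{k₂}` satisfies
`‖G‖_{ℓ²} ≤ C τ^{−1/2} B ‖h‖_{ℓ²}`. -/
theorem bilinear_estimate_Dtau :
    ∃ C > 0, ∀ τ : ℝ, 0 < τ → τ ≤ 1 → ∀ B : ℝ, ∀ ξ : ℤ → ℂ, (∀ k, ‖ξ k‖ ≤ B) →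
      ∀ h : ℤ → ℂ, Summable (fun k : ℤ => ‖h k‖ ^ 2) →
      ∀ G : ℤ → ℂ,
        (∀ k : ℤ, G k = avgExp τ ((k : ℝ) ^ 2) *
            ∑' k₁ : ℤ, ξ k₁ * avgExp τ (-(((k - k₁ : ℤ) : ℝ) ^ 2)) * h (k - k₁)) →
        Summable (fun k : ℤ => ‖G k‖ ^ 2) ∧
        (∑' k : ℤ, ‖G k‖ ^ 2) ^ ((1 : ℝ) / 2) ≤
          C * τ ^ (-(1 : ℝ) / 2) * B * (∑' k : ℤ, ‖h k‖ ^ 2) ^ ((1 : ℝ) / 2) := by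
  refine ⟨50, by norm_num, ?_⟩
  intro τ hτ hτ1 B ξ hξ h hh G hG
  have hB0 : 0 ≤ B := (norm_nonneg _).trans (hξ 0)
  have hst : 0 < Real.sqrt τ := Real.sqrt_pos.mpr hτ
  set v : ℤ → ℂ := fun j => avgExp τ (-((j:ℝ)^2)) with hvdef
  set w : ℤ → ℂ := fun k => avgExp τ ((k:ℝ)^2) with hwdef
  have hv : ∀ j, ‖v j‖^2 ≤ 8/(1+τ*(j:ℝ)^2) := fun j =>
    sq_norm_avgExp_le hτ j (by rw [abs_neg, abs_of_nonneg (sq_nonneg _)])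
  have hw : ∀ k, ‖w k‖^2 ≤ 8/(1+τ*(k:ℝ)^2) := fun k =>
    sq_norm_avgExp_le hτ k (abs_of_nonneg (sq_nonneg _))
  obtain ⟨hWsum, hWle⟩ := sum_weight_le hτ hτ1
  have hVsum2 : Summable (fun j : ℤ => ‖v j‖^2) :=
    Summable.of_nonneg_of_le (fun j => sq_nonneg _) hv hWsum
  have hW2 : Summable (fun k : ℤ => ‖w k‖^2) :=
    Summable.of_nonneg_of_le (fun k => sq_nonneg _) hw hWsum
  have tVle : (∑' j : ℤ, ‖v j‖^2) ≤ 50 / Real.sqrt τ :=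
    (Summable.tsum_le_tsum hv hVsum2 hWsum).trans hWle
  have tWle : (∑' k : ℤ, ‖w k‖^2) ≤ 50 / Real.sqrt τ :=
    (Summable.tsum_le_tsum hw hW2 hWsum).trans hWle
  obtain ⟨haSum, haLe⟩ := tsum_cs (fun j => ‖v j‖) (fun j => ‖h j‖)
    (fun j => norm_nonneg _) (fun j => norm_nonneg _) hVsum2 hh
  set S : ℝ := ∑' j : ℤ, ‖v j‖ * ‖h j‖ with hSdef
  have hS0 : 0 ≤ S := tsum_nonneg (fun j => mul_nonneg (norm_nonneg _) (norm_nonneg _))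
  set H : ℝ := Real.sqrt (∑' k : ℤ, ‖h k‖^2) with hHdef
  set Vb : ℝ := Real.sqrt (∑' j : ℤ, ‖v j‖^2) with hVbdef
  have hH0 : 0 ≤ H := Real.sqrt_nonneg _
  have hVb0 : 0 ≤ Vb := Real.sqrt_nonneg _
  have hVb2 : Vb^2 ≤ 50 / Real.sqrt τ := by
    rw [hVbdef, Real.sq_sqrt (tsum_nonneg (fun j => sq_nonneg _))]; exact tVle
  -- per-k translation summability
  have haShift : ∀ k : ℤ, Summable (fun k₁ : ℤ => ‖v (k - k₁)‖ * ‖h (k - k₁)‖) := by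
    intro k
    exact (Equiv.subLeft k).summable_iff.mpr haSum
  have haShiftEq : ∀ k : ℤ, (∑' k₁ : ℤ, ‖v (k - k₁)‖ * ‖h (k - k₁)‖) = S := by
    intro k
    exact (Equiv.subLeft k).tsum_eq (fun j => ‖v j‖ * ‖h j‖)
  have hnormbd : ∀ k k₁ : ℤ, ‖ξ k₁ * v (k - k₁) * h (k - k₁)‖ ≤ B * (‖v (k - k₁)‖ * ‖h (k - k₁)‖) := by
    intro k k₁
    rw [norm_mul, norm_mul, mul_assoc]
    apply mul_le_mul_of_nonneg_right (hξ k₁)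
    positivity
  have hsumNorm : ∀ k : ℤ, Summable (fun k₁ : ℤ => ‖ξ k₁ * v (k - k₁) * h (k - k₁)‖) := by
    intro k
    exact Summable.of_nonneg_of_le (fun k₁ => norm_nonneg _) (hnormbd k)
      ((haShift k).mul_left B)
  have hGk : ∀ k : ℤ, ‖G k‖ ≤ ‖w k‖ * (B * S) := by
    intro k
    rw [hG k, norm_mul]
    apply mul_le_mul_of_nonneg_left ?_ (norm_nonneg _)
    calc ‖∑' k₁ : ℤ, ξ k₁ * v (k - k₁) * h (k - k₁)‖
        ≤ ∑' k₁ : ℤ, ‖ξ k₁ * v (k - k₁) * h (k - k₁)‖ := norm_tsum_le_tsum_norm (hsumNorm k)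
      _ ≤ ∑' k₁ : ℤ, B * (‖v (k - k₁)‖ * ‖h (k - k₁)‖) :=
          Summable.tsum_le_tsum (hnormbd k) (hsumNorm k) ((haShift k).mul_left B)
      _ = B * S := by rw [tsum_mul_left, haShiftEq k]
  have hGk2 : ∀ k : ℤ, ‖G k‖^2 ≤ ‖w k‖^2 * (B * S)^2 := by
    intro k
    rw [← mul_pow]
    exact pow_le_pow_left₀ (norm_nonneg _) (hGk k) 2
  have hGsum : Summable (fun k : ℤ => ‖G k‖^2) :=
    Summable.of_nonneg_of_le (fun k => sq_nonneg _) hGk2 (hW2.mul_right _)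
  refine ⟨hGsum, ?_⟩
  have htG : (∑' k : ℤ, ‖G k‖^2) ≤ (50 / Real.sqrt τ) * (B * S)^2 := by
    calc (∑' k : ℤ, ‖G k‖^2) ≤ ∑' k : ℤ, ‖w k‖^2 * (B * S)^2 :=
          Summable.tsum_le_tsum hGk2 hGsum (hW2.mul_right _)
      _ = (∑' k : ℤ, ‖w k‖^2) * (B * S)^2 := tsum_mul_right
      _ ≤ (50 / Real.sqrt τ) * (B * S)^2 := by
          apply mul_le_mul_of_nonneg_right tWle (by positivity)
  have hSle : S ≤ Vb * H := haLe
  have hfinal : (∑' k : ℤ, ‖G k‖^2) ≤ ((50 / Real.sqrt τ) * B * H)^2 := by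
    have h1 : S^2 ≤ (Vb * H)^2 := pow_le_pow_left₀ hS0 hSle 2
    have h2 : (B*S)^2 ≤ B^2 * (Vb^2 * H^2) := by
      rw [mul_pow]
      apply mul_le_mul_of_nonneg_left ?_ (by positivity)
      calc S^2 ≤ (Vb*H)^2 := h1
        _ = Vb^2 * H^2 := by ring
    have h3 : B^2 * (Vb^2 * H^2) ≤ B^2 * ((50 / Real.sqrt τ) * H^2) := by
      apply mul_le_mul_of_nonneg_left ?_ (by positivity)
      apply mul_le_mul_of_nonneg_right hVb2 (by positivity)
    calc (∑' k : ℤ, ‖G k‖^2) ≤ (50 / Real.sqrt τ) * (B * S)^2 := htG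
      _ ≤ (50 / Real.sqrt τ) * (B^2 * ((50 / Real.sqrt τ) * H^2)) := by
          apply mul_le_mul_of_nonneg_left (h2.trans h3) (by positivity)
      _ = ((50 / Real.sqrt τ) * B * H)^2 := by ring
  have hsq : Real.sqrt (∑' k : ℤ, ‖G k‖^2) ≤ (50 / Real.sqrt τ) * B * H := by
    calc Real.sqrt (∑' k : ℤ, ‖G k‖^2) ≤ Real.sqrt (((50 / Real.sqrt τ) * B * H)^2) :=
          Real.sqrt_le_sqrt hfinal
      _ = (50 / Real.sqrt τ) * B * H := Real.sqrt_sq (by positivity)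
  have hrpow1 : (∑' k : ℤ, ‖G k‖^2) ^ ((1:ℝ)/2) = Real.sqrt (∑' k : ℤ, ‖G k‖^2) :=
    (Real.sqrt_eq_rpow _).symm
  have hrpow2 : (∑' k : ℤ, ‖h k‖^2) ^ ((1:ℝ)/2) = H := (Real.sqrt_eq_rpow _).symm
  have hrpow3 : τ ^ (-(1:ℝ)/2) = (Real.sqrt τ)⁻¹ := by
    rw [neg_div, Real.rpow_neg hτ.le, Real.sqrt_eq_rpow]
  rw [hrpow1, hrpow2, hrpow3]
  calc Real.sqrt (∑' k : ℤ, ‖G k‖^2) ≤ (50 / Real.sqrt τ) * B * H := hsq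
    _ = 50 * (Real.sqrt τ)⁻¹ * B * H := by rw [div_eq_mul_inv]
end

section
/- L²-stability of the potential part of the low-regularity integrator (Lemma 5.1, Fourier form): For every B > 0 there exists a constant C > 0 such that for all τ ∈ (0,1], all sequences ξ̂ : ℤ → ℂ with ξ̂_{−k} = conj(ξ̂_k) for all k and sup_{k} |ξ̂_k| ≤ B, and all h ∈ ℓ²(ℤ;ℂ), setting d_k = (1/τ)∫₀^τ e^{−isk²} ds and T(h)_k = h_k + iτ · conj(d_k) · Σ_{k₁+k₂=k} ξ̂_{k₁} d_{k₂} h_{k₂} (the sum converging absolutely), one has (Σ_{k∈ℤ} |T(h)_k|²)^{1/2} ≤ (1 + Cτ) (Σ_{k∈ℤ} |h_k|²)^{1/2}. -/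
lemma key_ineq {m : ℝ} (hm : 1 ≤ m) :
    1 / (m+1)^4 ≤ 1 / (3*m^3) - 1 / (3*(m+1)^3) := by
  have h0 : (0:ℝ) < m := lt_of_lt_of_le one_pos hm
  have h1 : (0:ℝ) < m + 1 := by linarith
  rw [div_sub_div _ _ (by positivity) (by positivity), div_le_div_iff₀ (by positivity) (by positivity)]
  nlinarith [pow_pos h0 3, pow_pos h1 3, sq_nonneg m, sq_nonneg (m+1), pow_pos h1 4,
    mul_pos (pow_pos h0 2) (pow_pos h1 2)]

lemma summable_tail (N : ℕ) :
    Summable (fun n : ℕ => (1:ℝ) / ((N + 1 + n : ℕ):ℝ)^4) := by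
  have hsum : Summable (fun n : ℕ => (1:ℝ)/((n:ℝ))^4) :=
    Real.summable_one_div_nat_pow.mpr (by norm_num)
  have := (summable_nat_add_iff (f := fun n : ℕ => (1:ℝ)/((n:ℝ))^4) (N+1)).mpr hsum
  apply this.congr
  intro n
  congr 2
  push_cast
  ring

lemma tail_inv_pow_four (N : ℕ) (hN : 1 ≤ N) :
    ∑' n : ℕ, (1:ℝ) / ((N + 1 + n : ℕ):ℝ)^4 ≤ 1 / (3 * (N:ℝ)^3) := by
  apply Summable.tsum_le_of_sum_le (summable_tail N)
  intro s
  obtain ⟨n, hn⟩ := s.exists_nat_subset_range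
  have hmono : ∑ i ∈ s, (1:ℝ) / ((N + 1 + i : ℕ):ℝ)^4
      ≤ ∑ i ∈ Finset.range n, (1:ℝ) / ((N + 1 + i : ℕ):ℝ)^4 := by
    apply Finset.sum_le_sum_of_subset_of_nonneg hn
    intro i _ _
    positivity
  refine hmono.trans ?_
  have hterm : ∀ i ∈ Finset.range n, (1:ℝ) / ((N + 1 + i : ℕ):ℝ)^4
      ≤ 1/(3*((N:ℝ)+i)^3) - 1/(3*((N:ℝ)+(i+1))^3) := by
    intro i _
    have hm : (1:ℝ) ≤ (N:ℝ) + i := by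
      have : (1:ℝ) ≤ (N:ℝ) := by exact_mod_cast hN
      have : (0:ℝ) ≤ (i:ℝ) := Nat.cast_nonneg i
      linarith
    have := key_ineq hm
    calc (1:ℝ) / ((N + 1 + i : ℕ):ℝ)^4 = 1 / (((N:ℝ)+i)+1)^4 := by
          congr 2; push_cast; ring
      _ ≤ 1/(3*((N:ℝ)+i)^3) - 1/(3*(((N:ℝ)+i)+1)^3) := this
      _ = 1/(3*((N:ℝ)+i)^3) - 1/(3*((N:ℝ)+(i+1))^3) := by ring_nf
  refine (Finset.sum_le_sum hterm).trans ?_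
  have := Finset.sum_range_sub' (f := fun i : ℕ => 1/(3*((N:ℝ)+i)^3)) n
  simp only [Nat.cast_add, Nat.cast_one] at this ⊢
  rw [this]
  have : (0:ℝ) ≤ 1/(3*((N:ℝ)+n)^3) := by positivity
  simp only [Nat.cast_zero, add_zero]
  linarith

lemma sum_sq_bound {τ : ℝ} (hτ : 0 < τ) (hτ1 : τ ≤ 1) (f : ℤ → ℝ)
    (hf0 : ∀ k, 0 ≤ f k) (hf1 : ∀ k, f k ≤ 1)
    (hf2 : ∀ k : ℤ, k ≠ 0 → f k ≤ 4 / (τ^2 * (k:ℝ)^4))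
    (hfeven : ∀ k, f (-k) = f k) :
    Summable f ∧ ∑' k, f k ≤ 10 / Real.sqrt τ := by
  set s := Real.sqrt τ with hs
  have hs0 : 0 < s := Real.sqrt_pos.mpr hτ
  have hss : s * s = τ := Real.mul_self_sqrt hτ.le
  have hs1 : s ≤ 1 := by
    rw [hs, show (1:ℝ) = Real.sqrt 1 from (Real.sqrt_one).symm]
    exact Real.sqrt_le_sqrt hτ1
  set t := 1 / s with ht
  have ht1 : 1 ≤ t := by rw [ht, le_div_iff₀ hs0]; linarith
  have ht0 : 0 < t := lt_of_lt_of_le one_pos ht1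
  set N := ⌈t⌉₊ with hNdef
  have hNt : t ≤ (N:ℝ) := Nat.le_ceil t
  have hNle : (N:ℝ) ≤ t + 1 := (Nat.ceil_lt_add_one ht0.le).le
  have hN1 : 1 ≤ N := by
    by_contra hcon
    push_neg at hcon
    interval_cases N
    · simp at hNt; linarith
  -- ℕ-side summability and bound
  have hshift_le : ∀ n : ℕ, f ((N + 1 + n : ℕ) : ℤ) ≤ (4/τ^2) * (1 / ((N+1+n : ℕ):ℝ)^4) := by
    intro n
    have hne : ((N + 1 + n : ℕ) : ℤ) ≠ 0 := by positivity
    have := hf2 _ hne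
    calc f ((N + 1 + n : ℕ) : ℤ) ≤ 4 / (τ^2 * (((N + 1 + n : ℕ):ℤ):ℝ)^4) := this
      _ = (4/τ^2) * (1 / ((N+1+n : ℕ):ℝ)^4) := by
          push_cast
          rw [div_mul_eq_div_div, div_eq_mul_one_div]
  have hsummable_shift : Summable (fun n : ℕ => f ((N + 1 + n : ℕ) : ℤ)) := by
    apply Summable.of_nonneg_of_le (fun n => hf0 _) hshift_le
    exact (summable_tail (N)).mul_left _
  have hfnat : Summable (fun n : ℕ => f (n : ℤ)) := by
    apply (summable_nat_add_iff (N+1)).mp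
    apply hsummable_shift.congr
    intro n
    exact congrArg (fun m : ℕ => f (m:ℤ)) (by omega)
  have htsum_nat : ∑' n : ℕ, f (n : ℤ) ≤ 5 * t := by
    have hsplit := Summable.sum_add_tsum_nat_add (f := fun n : ℕ => f (n : ℤ)) (N+1) hfnat
    have h1 : ∑ i ∈ Finset.range (N+1), f (i : ℤ) ≤ (N:ℝ) + 1 := by
      calc ∑ i ∈ Finset.range (N+1), f (i : ℤ) ≤ ∑ _i ∈ Finset.range (N+1), (1:ℝ) :=
            Finset.sum_le_sum (fun i _ => hf1 _)
        _ = (N:ℝ) + 1 := by simp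
    have h2 : ∑' n : ℕ, f ((n + (N+1) : ℕ) : ℤ) ≤ (4/τ^2) * (1 / (3 * (N:ℝ)^3)) := by
      have hc : ∑' n : ℕ, f ((n + (N+1) : ℕ) : ℤ) = ∑' n : ℕ, f ((N + 1 + n : ℕ) : ℤ) := by
        exact tsum_congr fun n => congrArg (fun m : ℕ => f (m:ℤ)) (by omega)
      rw [hc]
      calc ∑' n : ℕ, f ((N + 1 + n : ℕ) : ℤ)
          ≤ ∑' n : ℕ, (4/τ^2) * (1 / ((N+1+n : ℕ):ℝ)^4) :=
            Summable.tsum_le_tsum hshift_le hsummable_shift ((summable_tail N).mul_left _)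
        _ = (4/τ^2) * ∑' n : ℕ, (1 / ((N+1+n : ℕ):ℝ)^4) := tsum_mul_left
        _ ≤ (4/τ^2) * (1 / (3 * (N:ℝ)^3)) := by
            apply mul_le_mul_of_nonneg_left (tail_inv_pow_four N hN1) (by positivity)
    -- numeric bounds
    have hb1 : (N:ℝ) + 1 ≤ 3 * t := by linarith
    have hb2 : (4/τ^2) * (1 / (3 * (N:ℝ)^3)) ≤ (4/3) * t := by
      have hN3 : t^3 ≤ (N:ℝ)^3 := by
        apply pow_le_pow_left₀ ht0.le hNt
      have hNpos : (0:ℝ) < (N:ℝ)^3 := by positivity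
      have hτ2 : τ^2 = s^4 := by rw [← hss]; ring
      have hts : t = s⁻¹ := by rw [ht, one_div]
      have hkey : (4/τ^2) * (1 / (3 * (N:ℝ)^3)) ≤ (4/τ^2) * (1 / (3 * t^3)) := by
        apply mul_le_mul_of_nonneg_left _ (by positivity)
        apply div_le_div_of_nonneg_left (by norm_num) (by positivity)
        have : (0:ℝ) < t^3 := by positivity
        nlinarith
      refine hkey.trans ?_
      have : (4/τ^2) * (1 / (3 * t^3)) = (4/3) * t := by
        rw [hτ2, hts]
        field_simp
      rw [this]
    have hb2a : ∑' n : ℕ, f ((n + (N+1) : ℕ) : ℤ) ≤ (4/3) * t := h2.trans hb2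
    rw [← hsplit]
    calc ∑ i ∈ Finset.range (N+1), f (i:ℤ) + ∑' n : ℕ, f ((n + (N+1) : ℕ):ℤ)
        ≤ 3 * t + (4/3) * t := add_le_add (h1.trans hb1) hb2a
      _ ≤ 5 * t := by linarith

  -- negative side
  have hneg_eq : ∀ n : ℕ, f (-((n:ℤ) + 1)) = f (((n+1 : ℕ)):ℤ) := by
    intro n
    rw [hfeven]
    exact congrArg f (by omega)
  have hfneg : Summable (fun n : ℕ => f (-((n:ℤ) + 1))) := by
    have h' : Summable (fun n : ℕ => f (((n+1 : ℕ)):ℤ)) := (summable_nat_add_iff 1).mpr hfnat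
    exact h'.congr (fun n => (hneg_eq n).symm)
  have hsummable : Summable f := Summable.of_nat_of_neg_add_one hfnat hfneg
  constructor
  · exact hsummable
  · have hzsplit := tsum_of_nat_of_neg_add_one hfnat hfneg
    have hnegsum : ∑' n : ℕ, f (-((n:ℤ) + 1)) ≤ 5 * t := by
      have : ∑' n : ℕ, f (-((n:ℤ) + 1)) = ∑' n : ℕ, f (((n + 1 : ℕ)):ℤ) := by
        exact tsum_congr hneg_eq
      rw [this]
      have hsub : ∑' n : ℕ, f (((n + 1 : ℕ)):ℤ) ≤ ∑' n : ℕ, f ((n:ℕ):ℤ) := by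
        have hs1' := Summable.sum_add_tsum_nat_add (f := fun n : ℕ => f (n : ℤ)) 1 hfnat
        have h0 : 0 ≤ f ((0:ℕ):ℤ) := hf0 _
        have hterm : ∑' n : ℕ, f (((n + 1 : ℕ)):ℤ) = ∑' n : ℕ, f ((n + 1 : ℕ):ℤ) := rfl
        calc ∑' n : ℕ, f (((n + 1 : ℕ)):ℤ) ≤ f ((0:ℕ):ℤ) + ∑' n : ℕ, f ((n + 1 : ℕ):ℤ) := by
              rw [hterm]; linarith
          _ = ∑' n : ℕ, f ((n:ℕ):ℤ) := by
              rw [← hs1']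
              simp
      exact hsub.trans htsum_nat
    rw [hzsplit]
    have : 5 * t + 5 * t = 10 * t := by ring
    calc ∑' n : ℕ, f (n:ℤ) + ∑' n : ℕ, f (-((n:ℤ)+1)) ≤ 5*t + 5*t := add_le_add htsum_nat hnegsum
      _ = 10 / s := by rw [ht]; ring

/-- L²-stability of the potential part of the low-regularity integrator (Lemma 5.1,
Fourier form): for every `B > 0` there is `C > 0` such that for all `τ ∈ (0,1]`, all
conjugate-symmetric `ξ̂` with `sup_k |ξ̂_k| ≤ B`, and all `h ∈ ℓ²(ℤ;ℂ)`, the map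
`T(h)_k = h_k + iτ conj(d_k) Σ_{k₁+k₂=k} ξ̂_{k₁} d_{k₂} h_{k₂}` (with
`d_k = (1/τ)∫₀^τ e^{−isk²} ds`) satisfies `‖T(h)‖_{ℓ²} ≤ (1 + Cτ) ‖h‖_{ℓ²}`. -/
theorem potential_part_L2_stability (B : ℝ) (hB : 0 < B) :
    ∃ C > 0, ∀ τ : ℝ, 0 < τ → τ ≤ 1 →
      ∀ ξ : ℤ → ℂ, (∀ k : ℤ, ξ (-k) = (starRingEnd ℂ) (ξ k)) → (∀ k, ‖ξ k‖ ≤ B) →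
      ∀ h : ℤ → ℂ, Summable (fun k : ℤ => ‖h k‖ ^ 2) →
      ∀ Th : ℤ → ℂ,
        (∀ k : ℤ, Th k = h k +
            Complex.I * (τ : ℂ) * (starRingEnd ℂ) (avgExp τ (-((k : ℝ) ^ 2))) *
              ∑' k₁ : ℤ, ξ k₁ * avgExp τ (-(((k - k₁ : ℤ) : ℝ) ^ 2)) * h (k - k₁)) →
        Summable (fun k : ℤ => ‖Th k‖ ^ 2) ∧
        (∑' k : ℤ, ‖Th k‖ ^ 2) ^ ((1 : ℝ) / 2) ≤
          (1 + C * τ) * (∑' k : ℤ, ‖h k‖ ^ 2) ^ ((1 : ℝ) / 2) := by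
  refine ⟨100 * B^2, by positivity, ?_⟩
  intro τ hτ hτ1 ξ hξsym hξB h hh Th hTh
  -- the multiplier symbols
  let d : ℤ → ℂ := fun k => avgExp τ (-((k:ℝ)^2))
  let f : ℤ → ℝ := fun k => ‖d k‖^2
  let a : ℤ → ℝ := fun k => ‖d k‖ * ‖h k‖
  have hd1 : ∀ k : ℤ, ‖d k‖ ≤ 1 := fun k => norm_avgExp_le_one hτ _
  have hd2 : ∀ k : ℤ, k ≠ 0 → ‖d k‖ ≤ 2 / (τ * (k:ℝ)^2) := by
    intro k hk
    have hk' : ((k:ℝ)) ≠ 0 := Int.cast_ne_zero.mpr hk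
    have hα : -((k:ℝ)^2) ≠ 0 := by
      simp only [neg_ne_zero]
      exact pow_ne_zero 2 hk'
    have hle := norm_avgExp_le_div hτ hα
    rwa [abs_neg, abs_of_nonneg (sq_nonneg _)] at hle
  have hd0 : ∀ k : ℤ, 0 ≤ ‖d k‖ := fun k => norm_nonneg _
  have hf0 : ∀ k, 0 ≤ f k := fun k => sq_nonneg _
  have hf1 : ∀ k, f k ≤ 1 := by
    intro k
    have h1 := hd1 k
    have h2 := hd0 k
    show ‖d k‖^2 ≤ 1
    nlinarith
  have hf2 : ∀ k : ℤ, k ≠ 0 → f k ≤ 4 / (τ^2 * (k:ℝ)^4) := by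
    intro k hk
    have hk' : ((k:ℝ)) ≠ 0 := Int.cast_ne_zero.mpr hk
    have h1 := hd2 k hk
    have h2 : (2 / (τ * (k:ℝ)^2))^2 = 4 / (τ^2 * (k:ℝ)^4) := by
      rw [div_pow]
      congr 1
      · norm_num
      · ring
    calc f k = ‖d k‖^2 := rfl
      _ ≤ (2 / (τ * (k:ℝ)^2))^2 := by
          apply pow_le_pow_left₀ (hd0 k) h1
      _ = 4 / (τ^2 * (k:ℝ)^4) := h2
  have hfeven : ∀ k, f (-k) = f k := by
    intro k
    show ‖avgExp τ (-(((-k:ℤ):ℝ)^2))‖^2 = ‖avgExp τ (-((k:ℝ)^2))‖^2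
    congr 2
    push_cast
    ring
  obtain ⟨hS, hSle⟩ := sum_sq_bound hτ hτ1 f hf0 hf1 hf2 hfeven
  set S := ∑' k, f k with hSdef
  have hS0 : 0 ≤ S := tsum_nonneg hf0
  set H := ∑' k, ‖h k‖^2 with hHdef
  have hH0 : 0 ≤ H := tsum_nonneg (fun k => sq_nonneg _)
  -- a is summable
  have ha_le : ∀ k, a k ≤ (f k + ‖h k‖^2) / 2 := by
    intro k
    have := two_mul_le_add_sq ‖d k‖ ‖h k‖
    show ‖d k‖ * ‖h k‖ ≤ (‖d k‖^2 + ‖h k‖^2)/2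
    nlinarith
  have ha : Summable a := by
    apply Summable.of_nonneg_of_le (fun k => mul_nonneg (hd0 k) (norm_nonneg _)) ha_le
    exact (hS.add hh).div_const 2
  set L := ∑' k, a k with hLdef
  have hL0 : 0 ≤ L := tsum_nonneg (fun k => mul_nonneg (hd0 k) (norm_nonneg _))
  have hLsq : L^2 ≤ S * H := by
    have hLle : L ≤ Real.sqrt (S * H) := by
      apply Summable.tsum_le_of_sum_le ha
      intro u
      have hcs := Finset.sum_mul_sq_le_sq_mul_sq u (fun k => ‖d k‖) (fun k => ‖h k‖)
      have h1 : ∑ k ∈ u, ‖d k‖^2 ≤ S := Summable.sum_le_tsum u (fun k _ => hf0 k) hS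
      have h2 : ∑ k ∈ u, ‖h k‖^2 ≤ H := Summable.sum_le_tsum u (fun k _ => sq_nonneg _) hh
      have h3 : (∑ k ∈ u, a k)^2 ≤ S * H := by
        calc (∑ k ∈ u, a k)^2 ≤ (∑ k ∈ u, ‖d k‖^2) * (∑ k ∈ u, ‖h k‖^2) := hcs
          _ ≤ S * H := by
              apply mul_le_mul h1 h2 (Finset.sum_nonneg (fun k _ => sq_nonneg _)) hS0
      have h4 : 0 ≤ ∑ k ∈ u, a k :=
        Finset.sum_nonneg (fun k _ => mul_nonneg (hd0 k) (norm_nonneg _))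
      exact (Real.le_sqrt h4 (mul_nonneg hS0 hH0)).mpr h3
    calc L^2 ≤ (Real.sqrt (S * H))^2 := by
          apply pow_le_pow_left₀ hL0 hLle
      _ = S * H := Real.sq_sqrt (mul_nonneg hS0 hH0)
  -- the convolution term
  let g : ℤ → ℤ → ℂ := fun k k₁ => ξ k₁ * d (k - k₁) * h (k - k₁)
  let W : ℤ → ℂ := fun k => ∑' k₁, g k k₁
  have hTh' : ∀ k, Th k = h k + Complex.I * (τ:ℂ) * (starRingEnd ℂ) (d k) * W k :=
    fun k => hTh k
  have ha_comp : ∀ k : ℤ, Summable (fun k₁ => a (k - k₁)) := by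
    intro k
    have : Summable (a ∘ (Equiv.subLeft k)) := (Equiv.summable_iff (Equiv.subLeft k)).mpr ha
    exact this.congr (fun k₁ => by simp [Equiv.subLeft])
  have ha_sum_eq : ∀ k : ℤ, ∑' k₁, a (k - k₁) = L := by
    intro k
    rw [hLdef]
    have := Equiv.tsum_eq (Equiv.subLeft k) a
    rw [← this]
    apply tsum_congr
    intro k₁
    simp [Equiv.subLeft]
  have hg_norm : ∀ k k₁ : ℤ, ‖g k k₁‖ ≤ B * a (k - k₁) := by
    intro k k₁
    show ‖ξ k₁ * d (k - k₁) * h (k - k₁)‖ ≤ B * (‖d (k-k₁)‖ * ‖h (k-k₁)‖)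
    rw [norm_mul, norm_mul, mul_assoc]
    apply mul_le_mul_of_nonneg_right (hξB k₁)
    positivity
  have hg_sum : ∀ k, Summable (g k) := by
    intro k
    exact Summable.of_norm_bounded ((ha_comp k).mul_left B) (hg_norm k)
  have hW_le : ∀ k, ‖W k‖ ≤ B * L := by
    intro k
    have hn : Summable (fun k₁ => ‖g k k₁‖) :=
      Summable.of_nonneg_of_le (fun k₁ => norm_nonneg _) (hg_norm k) ((ha_comp k).mul_left B)
    calc ‖W k‖ ≤ ∑' k₁, ‖g k k₁‖ := norm_tsum_le_tsum_norm hn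
      _ ≤ ∑' k₁, B * a (k - k₁) := Summable.tsum_le_tsum (hg_norm k) hn ((ha_comp k).mul_left B)
      _ = B * ∑' k₁, a (k - k₁) := tsum_mul_left
      _ = B * L := by rw [ha_sum_eq k]
  -- the correction term
  let c : ℤ → ℂ := fun k => Complex.I * (τ:ℂ) * (starRingEnd ℂ) (d k) * W k
  have hc_norm : ∀ k, ‖c k‖ ≤ (τ * (B * L)) * ‖d k‖ := by
    intro k
    show ‖Complex.I * (τ:ℂ) * (starRingEnd ℂ) (d k) * W k‖ ≤ (τ * (B * L)) * ‖d k‖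
    rw [norm_mul, norm_mul, norm_mul, Complex.norm_I, one_mul, Complex.norm_real,
      Real.norm_eq_abs, abs_of_pos hτ, RCLike.norm_conj]
    calc τ * ‖d k‖ * ‖W k‖ ≤ τ * ‖d k‖ * (B * L) := by
          apply mul_le_mul_of_nonneg_left (hW_le k) (by positivity)
      _ = (τ * (B * L)) * ‖d k‖ := by ring
  have hc_sq : ∀ k, ‖c k‖^2 ≤ (τ * (B * L))^2 * f k := by
    intro k
    have h1 := hc_norm k
    have h2 : 0 ≤ ‖c k‖ := norm_nonneg _
    have h3 : 0 ≤ (τ * (B * L)) := by positivity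
    show ‖c k‖^2 ≤ (τ * (B * L))^2 * ‖d k‖^2
    nlinarith [hd0 k]
  have hsumc : Summable (fun k => ‖c k‖^2) := by
    apply Summable.of_nonneg_of_le (fun k => sq_nonneg _) hc_sq
    exact hS.mul_left _
  have hCsum_le : ∑' k, ‖c k‖^2 ≤ (τ * (B * L))^2 * S := by
    calc ∑' k, ‖c k‖^2 ≤ ∑' k, (τ * (B * L))^2 * f k :=
          Summable.tsum_le_tsum hc_sq hsumc (hS.mul_left _)
      _ = (τ * (B * L))^2 * S := tsum_mul_left
  have hTh_eq : ∀ k, Th k = h k + c k := hTh'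
  -- cross term
  let r : ℤ → ℂ := fun k => (starRingEnd ℂ) (h k) * c k
  have hr_norm : ∀ k, ‖r k‖ ≤ (‖h k‖^2 + ‖c k‖^2)/2 := by
    intro k
    show ‖(starRingEnd ℂ) (h k) * c k‖ ≤ _
    rw [norm_mul, RCLike.norm_conj]
    nlinarith [norm_nonneg (h k), norm_nonneg (c k), sq_nonneg (‖h k‖ - ‖c k‖)]
  have hhc2 : Summable (fun k => (‖h k‖^2 + ‖c k‖^2)/2) := (hh.add hsumc).div_const 2
  have hr_sum : Summable r := Summable.of_norm_bounded hhc2 hr_norm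
  have hre_sum : Summable (fun k => (r k).re) := by
    apply Summable.of_norm_bounded hhc2
    intro k
    calc ‖(r k).re‖ ≤ ‖r k‖ := Complex.abs_re_le_norm (r k)
      _ ≤ _ := hr_norm k
  -- expansion of the square
  have hexp : ∀ k, ‖Th k‖^2 = ‖h k‖^2 + 2*(r k).re + ‖c k‖^2 := by
    intro k
    rw [hTh_eq k]
    have hre : ((h k) * (starRingEnd ℂ) (c k)).re = (r k).re := by
      have h1 : r k = (starRingEnd ℂ) ((h k) * (starRingEnd ℂ) (c k)) := by
        rw [map_mul, Complex.conj_conj]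
      rw [h1, Complex.conj_re]
    calc ‖h k + c k‖^2 = Complex.normSq (h k + c k) := by
          rw [Complex.sq_norm]
      _ = Complex.normSq (h k) + Complex.normSq (c k) + 2*((h k) * (starRingEnd ℂ) (c k)).re :=
          Complex.normSq_add _ _
      _ = ‖h k‖^2 + 2*(r k).re + ‖c k‖^2 := by
          rw [hre, ← Complex.sq_norm, ← Complex.sq_norm]
          ring
  -- the double-sum kernel
  let P : ℤ × ℤ → ℂ := fun p =>
    (starRingEnd ℂ) (d p.1 * h p.1) * (ξ p.2 * d (p.1 - p.2) * h (p.1 - p.2))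
  have hP_norm : ∀ p : ℤ × ℤ, ‖P p‖ ≤ (B * a p.1) * a (p.1 - p.2) := by
    rintro ⟨k, k₁⟩
    show ‖(starRingEnd ℂ) (d k * h k) * (ξ k₁ * d (k - k₁) * h (k - k₁))‖ ≤ _
    rw [norm_mul, RCLike.norm_conj, norm_mul]
    have h1 : ‖d k‖ * ‖h k‖ = a k := rfl
    rw [h1]
    have h2 := hg_norm k k₁
    have h3 : 0 ≤ a k := mul_nonneg (hd0 k) (norm_nonneg _)
    calc a k * ‖ξ k₁ * d (k - k₁) * h (k - k₁)‖ ≤ a k * (B * a (k - k₁)) :=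
          mul_le_mul_of_nonneg_left h2 h3
      _ = (B * a k) * a (k - k₁) := by ring
  have hQ : Summable (fun p : ℤ × ℤ => (B * a p.1) * a (p.1 - p.2)) := by
    apply (summable_prod_of_nonneg ?_).mpr
    constructor
    · intro k
      exact (ha_comp k).mul_left (B * a k)
    · have h6 : Summable (fun k => B * a k * L) := by
        apply (ha.mul_left (B * L)).congr
        intro k
        show B * L * a k = B * a k * L
        ring
      apply h6.congr
      intro k
      show B * a k * L = ∑' k₁, B * a k * a (k - k₁)
      rw [tsum_mul_left, ha_sum_eq k]
    · rintro ⟨k, k₁⟩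
      have h3 : 0 ≤ a k := mul_nonneg (hd0 k) (norm_nonneg _)
      have h4 : 0 ≤ a (k - k₁) := mul_nonneg (hd0 _) (norm_nonneg _)
      positivity
  have hP : Summable P := Summable.of_norm_bounded hQ hP_norm
  set Z := ∑' p : ℤ × ℤ, P p with hZdef
  -- the cross term is i τ Z
  have hr_eq : ∀ k, r k = Complex.I * (τ:ℂ) * ∑' k₁, P (k, k₁) := by
    intro k
    show (starRingEnd ℂ) (h k) * (Complex.I * (τ:ℂ) * (starRingEnd ℂ) (d k) * W k) = _
    have h1 : ∑' k₁, P (k, k₁) = (starRingEnd ℂ) (d k * h k) * W k := by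
      rw [show (starRingEnd ℂ) (d k * h k) * W k
          = ∑' k₁, (starRingEnd ℂ) (d k * h k) * g k k₁ from tsum_mul_left.symm]
    rw [h1, map_mul]
    ring
  have hX_eq : ∑' k, r k = Complex.I * (τ:ℂ) * Z := by
    rw [hZdef, Summable.tsum_prod' hP (fun k => ?_)]
    · rw [show (∑' k, r k) = ∑' k, Complex.I * (τ:ℂ) * ∑' k₁, P (k, k₁) from
        tsum_congr hr_eq]
      rw [tsum_mul_left]
    · apply Summable.of_norm_bounded ((ha_comp k).mul_left (B * a k))
      intro k₁
      exact hP_norm (k, k₁)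
  -- Z is real by symmetry
  have hinv : Function.Involutive (fun p : ℤ × ℤ => (p.1 - p.2, -p.2)) := by
    rintro ⟨k, k₁⟩
    simp only [Prod.mk.injEq]
    constructor <;> ring
  have hZconj : (starRingEnd ℂ) Z = Z := by
    rw [hZdef, starRingEnd_apply, tsum_star]
    have hPconj : ∀ p : ℤ × ℤ, star (P p) = P (p.1 - p.2, -p.2) := by
      rintro ⟨k, k₁⟩
      show star ((starRingEnd ℂ) (d k * h k) * (ξ k₁ * d (k - k₁) * h (k - k₁)))
        = (starRingEnd ℂ) (d (k - k₁) * h (k - k₁)) *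
            (ξ (-k₁) * d (k - k₁ - -k₁) * h (k - k₁ - -k₁))
      have hk : k - k₁ - -k₁ = k := by ring
      rw [hk, hξsym k₁, ← starRingEnd_apply]
      simp only [map_mul, Complex.conj_conj]
      ring
    rw [tsum_congr hPconj]
    exact Equiv.tsum_eq (Function.Involutive.toPerm _ hinv) P
  have hZim : Z.im = 0 := by
    rw [← Complex.conj_eq_iff_im]
    exact hZconj
  have hre_zero : ∑' k, (r k).re = 0 := by
    have h1 : (∑' k, r k).re = ∑' k, (r k).re := Complex.re_tsum hr_sum
    rw [← h1, hX_eq]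
    simp [Complex.mul_re, Complex.mul_im, hZim]
  -- assembling the sums
  have hsum_cross : Summable (fun k => 2 * (r k).re) := hre_sum.mul_left 2
  have hsum_Th : Summable (fun k : ℤ => ‖Th k‖^2) := by
    rw [show (fun k : ℤ => ‖Th k‖^2) = (fun k : ℤ => ‖h k‖^2 + 2*(r k).re + ‖c k‖^2) from
      funext hexp]
    exact (hh.add hsum_cross).add hsumc
  refine ⟨hsum_Th, ?_⟩
  have hTtot : ∑' k, ‖Th k‖^2 = H + ∑' k, ‖c k‖^2 := by
    rw [show (∑' k, ‖Th k‖^2) = ∑' k, (‖h k‖^2 + 2*(r k).re + ‖c k‖^2) from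
      tsum_congr hexp]
    rw [Summable.tsum_add (hh.add hsum_cross) hsumc, Summable.tsum_add hh hsum_cross]
    rw [show (∑' k, 2*(r k).re) = 2 * ∑' k, (r k).re from tsum_mul_left]
    rw [hre_zero]
    ring
  -- final numeric estimate
  have hSsq : S^2 ≤ 100 / τ := by
    have hsqrt : 0 < Real.sqrt τ := Real.sqrt_pos.mpr hτ
    have h1 : S^2 ≤ (10 / Real.sqrt τ)^2 := by
      apply pow_le_pow_left₀ hS0 hSle
    have h2 : (10 / Real.sqrt τ)^2 = 100 / τ := by
      rw [div_pow, Real.sq_sqrt hτ.le]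
      norm_num
    rw [← h2]; exact h1
  have hfinal : ∑' k, ‖Th k‖^2 ≤ (1 + (100 * B^2) * τ) * H := by
    rw [hTtot]
    have h1 : (τ * (B * L))^2 * S ≤ (100 * B^2) * τ * H := by
      have e1 : (τ * (B * L))^2 * S = τ^2 * B^2 * (L^2 * S) := by ring
      rw [e1]
      have e2 : L^2 * S ≤ (S * H) * S := by
        apply mul_le_mul_of_nonneg_right hLsq hS0
      have e3 : τ^2 * B^2 * (L^2 * S) ≤ τ^2 * B^2 * ((S * H) * S) := by
        apply mul_le_mul_of_nonneg_left e2 (by positivity)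
      refine e3.trans ?_
      have e4 : τ^2 * B^2 * ((S * H) * S) = (S^2 * τ) * (τ * B^2 * H) := by ring
      rw [e4]
      have e5 : S^2 * τ ≤ 100 := by
        have := mul_le_mul_of_nonneg_right hSsq hτ.le
        rwa [div_mul_cancel₀ _ (ne_of_gt hτ)] at this
      calc (S^2 * τ) * (τ * B^2 * H) ≤ 100 * (τ * B^2 * H) := by
            apply mul_le_mul_of_nonneg_right e5 (by positivity)
        _ = (100 * B^2) * τ * H := by ring
    linarith [hCsum_le, h1]
  -- square roots
  have hTtot0 : 0 ≤ ∑' k, ‖Th k‖^2 := tsum_nonneg (fun k => sq_nonneg _)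
  have hcoef1 : (1:ℝ) ≤ 1 + (100 * B^2) * τ := by nlinarith
  have hcoef0 : (0:ℝ) ≤ 1 + (100 * B^2) * τ := by linarith
  calc (∑' k, ‖Th k‖^2) ^ ((1:ℝ)/2) ≤ ((1 + (100 * B^2) * τ) * H) ^ ((1:ℝ)/2) := by
        apply Real.rpow_le_rpow hTtot0 hfinal (by norm_num)
    _ = (1 + (100 * B^2) * τ) ^ ((1:ℝ)/2) * H ^ ((1:ℝ)/2) :=
        Real.mul_rpow hcoef0 hH0
    _ ≤ (1 + (100 * B^2) * τ) * H ^ ((1:ℝ)/2) := by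
        apply mul_le_mul_of_nonneg_right _ (Real.rpow_nonneg hH0 _)
        calc (1 + (100 * B^2) * τ) ^ ((1:ℝ)/2)
            ≤ (1 + (100 * B^2) * τ) ^ ((1:ℝ)) :=
              Real.rpow_le_rpow_of_exponent_le hcoef1 (by norm_num)
          _ = 1 + (100 * B^2) * τ := Real.rpow_one _
end

section
/- Trilinear product estimate at negative regularity (key estimate in the proof of Theorem 1.2, combining S₁ and S₂): Let s ≥ 0, 2 ≤ p < ∞, set σ = s + 1/p − 1/2, and assume σ < 0; let ε > 0 and set ρ = s + 3/2 + 1/p + ε. There exists a constant C > 0 such that for all sequences a, c : ℤ → ℂ with ‖a‖_{h^ρ} < ∞ and ‖c‖_{h^σ} < ∞, the triple convolution T_k = Σ_{k₁+k₂+k₃=k} a_{k₁} a_{k₂} c_{k₃} converges absolutely for every k ∈ ℤ and satisfies ( Σ_{k∈ℤ} ⟨k⟩^{2σ} |T_k|² )^{1/2} ≤ C ‖a‖_{h^ρ}² ‖c‖_{h^σ}. -/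
/-- The Japanese bracket `⟨k⟩ = (1 + k²)^{1/2}` of an integer `k`. -/
noncomputable def jbr (k : ℤ) : ℝ := Real.sqrt (1 + (k : ℝ) ^ 2)

/-- The `h^σ` norm `(Σ_k ⟨k⟩^{2σ} |w_k|²)^{1/2}` of a sequence. -/
noncomputable def hnorm (σ : ℝ) (w : ℤ → ℂ) : ℝ :=
  (∑' k : ℤ, jbr k ^ (2 * σ) * ‖w k‖ ^ 2) ^ ((1 : ℝ) / 2)

lemma jbr_pos (k : ℤ) : 0 < jbr k := Real.sqrt_pos.2 (by positivity)

lemma jbr_neg (k : ℤ) : jbr (-k) = jbr k := by simp [jbr]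

lemma abs_le_jbr (k : ℤ) : |(k:ℝ)| ≤ jbr k := by
  rw [show |(k:ℝ)| = Real.sqrt ((k:ℝ)^2) by rw [Real.sqrt_sq_eq_abs]]
  exact Real.sqrt_le_sqrt (by nlinarith)

lemma jbr_add_le (x y : ℤ) : jbr (x + y) ≤ 2 * (jbr x * jbr y) := by
  have h4 : Real.sqrt 4 = 2 := by
    rw [show (4:ℝ) = 2^2 by norm_num, Real.sqrt_sq (by norm_num)]
  have h : jbr (x + y) ≤ Real.sqrt (4 * ((1 + (x:ℝ)^2) * (1 + (y:ℝ)^2))) := by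
    apply Real.sqrt_le_sqrt; push_cast; nlinarith [sq_nonneg ((x:ℝ) - y), sq_nonneg ((x:ℝ)*y)]
  calc jbr (x + y) ≤ Real.sqrt (4 * ((1 + (x:ℝ)^2) * (1 + (y:ℝ)^2))) := h
    _ = 2 * (jbr x * jbr y) := by
        rw [Real.sqrt_mul (by norm_num), Real.sqrt_mul (by positivity), h4]; rfl

lemma jbr_rpow_sq (k : ℤ) (x : ℝ) : (jbr k ^ x) ^ 2 = jbr k ^ (2 * x) := by
  rw [← Real.rpow_natCast (jbr k ^ x) 2, ← Real.rpow_mul (jbr_pos k).le, mul_comm]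
  norm_num

lemma summable_jbr_rpow {r : ℝ} (hr : 1 < r) : Summable (fun k : ℤ => jbr k ^ (-r)) := by
  have hbase : Summable (fun k : ℤ => |(k:ℝ)| ^ (-r)) := Real.summable_abs_int_rpow hr
  have hsingle : Summable (fun k : ℤ => if k = 0 then (1:ℝ) else 0) := by
    apply summable_of_ne_finset_zero (s := {0})
    intro b hb; simp at hb; simp [hb]
  apply Summable.of_nonneg_of_le (fun k : ℤ => Real.rpow_nonneg (jbr_pos k).le _)
    (f := fun k : ℤ => |(k:ℝ)| ^ (-r) + (if k = 0 then (1:ℝ) else 0)) _ (hbase.add hsingle)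
  intro k
  by_cases hk : k = 0
  · subst hk
    simp only [Int.cast_zero, abs_zero, if_true]
    rw [Real.zero_rpow (by linarith : -r ≠ 0), show jbr 0 = 1 by simp [jbr], Real.one_rpow]
    norm_num
  · have h1 : (1:ℝ) ≤ |(k:ℝ)| := by
      rw [← Int.cast_abs]; exact_mod_cast Int.one_le_abs (by exact_mod_cast hk)
    have h := Real.rpow_le_rpow_of_nonpos (lt_of_lt_of_le one_pos h1) (abs_le_jbr k)
      (neg_nonpos.2 (le_of_lt (lt_trans one_pos hr)))
    simp only [hk, if_false, add_zero]
    exact h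

lemma tsum_cs_s19 {ι : Type*} (f g : ι → ℝ) (hf0 : ∀ i, 0 ≤ f i) (hg0 : ∀ i, 0 ≤ g i)
    (hf : Summable (fun i => f i ^ 2)) (hg : Summable (fun i => g i ^ 2)) :
    Summable (fun i => f i * g i) ∧
      (∑' i, f i * g i) ≤ Real.sqrt (∑' i, f i ^ 2) * Real.sqrt (∑' i, g i ^ 2) := by
  have hsum : Summable (fun i => f i * g i) := by
    apply Summable.of_nonneg_of_le (fun i => mul_nonneg (hf0 i) (hg0 i))
      (f := fun i => (f i ^ 2 + g i ^ 2) / 2) _ ((hf.add hg).div_const 2)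
    intro i; nlinarith [sq_nonneg (f i - g i)]
  refine ⟨hsum, hsum.tsum_le_of_sum_le fun u => ?_⟩
  have h1 : (∑ i ∈ u, f i * g i) ^ 2 ≤ (∑ i ∈ u, f i ^ 2) * ∑ i ∈ u, g i ^ 2 :=
    Finset.sum_mul_sq_le_sq_mul_sq u f g
  have h2 : (∑ i ∈ u, f i ^ 2) ≤ ∑' i, f i ^ 2 := hf.sum_le_tsum u (fun i _ => sq_nonneg _)
  have h3 : (∑ i ∈ u, g i ^ 2) ≤ ∑' i, g i ^ 2 := hg.sum_le_tsum u (fun i _ => sq_nonneg _)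
  calc (∑ i ∈ u, f i * g i) = Real.sqrt ((∑ i ∈ u, f i * g i) ^ 2) :=
        (Real.sqrt_sq (Finset.sum_nonneg fun i _ => mul_nonneg (hf0 i) (hg0 i))).symm
    _ ≤ Real.sqrt ((∑' i, f i ^ 2) * ∑' i, g i ^ 2) := by
        apply Real.sqrt_le_sqrt
        calc (∑ i ∈ u, f i * g i) ^ 2 ≤ (∑ i ∈ u, f i ^ 2) * ∑ i ∈ u, g i ^ 2 := h1
          _ ≤ (∑' i, f i ^ 2) * ∑' i, g i ^ 2 := by
              apply mul_le_mul h2 h3 (Finset.sum_nonneg fun i _ => sq_nonneg _)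
              exact tsum_nonneg fun i => sq_nonneg _
    _ = _ := Real.sqrt_mul (tsum_nonneg fun i => sq_nonneg _) _

lemma jbr_key {σ : ℝ} (hσ : σ ≤ 0) (k m1 m2 : ℤ) :
    jbr k ^ σ ≤ (4:ℝ) ^ (-σ) * jbr m1 ^ (-σ) * jbr m2 ^ (-σ) * jbr (k - m1 - m2) ^ σ := by
  set m3 := k - m1 - m2 with hm3
  have hB : jbr m3 ≤ 4 * jbr k * jbr m1 * jbr m2 := by
    have h1 : jbr m3 ≤ 2 * (jbr (k - m1) * jbr m2) := by
      have h := jbr_add_le (k - m1) (-m2)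
      rw [show k - m1 + -m2 = m3 by rw [hm3]; ring, jbr_neg] at h
      exact h
    have h2 : jbr (k - m1) ≤ 2 * (jbr k * jbr m1) := by
      have h := jbr_add_le k (-m1)
      rw [show k + -m1 = k - m1 by ring, jbr_neg] at h
      exact h
    nlinarith [jbr_pos m2, jbr_pos (k - m1), jbr_pos k, jbr_pos m1]
  have h3 : (4 * jbr k * jbr m1 * jbr m2) ^ σ ≤ jbr m3 ^ σ :=
    Real.rpow_le_rpow_of_nonpos (jbr_pos _) hB hσ
  have h4 : (4 * jbr k * jbr m1 * jbr m2) ^ σ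
      = 4 ^ σ * jbr k ^ σ * jbr m1 ^ σ * jbr m2 ^ σ := by
    rw [Real.mul_rpow (mul_nonneg (mul_nonneg (by norm_num) (jbr_pos k).le) (jbr_pos m1).le)
          (jbr_pos m2).le,
        Real.mul_rpow (mul_nonneg (by norm_num) (jbr_pos k).le) (jbr_pos m1).le,
        Real.mul_rpow (by norm_num) (jbr_pos k).le]
  rw [h4] at h3
  have hne4 : (4:ℝ) ^ σ ≠ 0 := (Real.rpow_pos_of_pos (by norm_num) σ).ne'
  have hne1 : jbr m1 ^ σ ≠ 0 := (Real.rpow_pos_of_pos (jbr_pos m1) σ).ne'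
  have hne2 : jbr m2 ^ σ ≠ 0 := (Real.rpow_pos_of_pos (jbr_pos m2) σ).ne'
  rw [Real.rpow_neg (by norm_num : (0:ℝ) ≤ 4), Real.rpow_neg (jbr_pos m1).le,
      Real.rpow_neg (jbr_pos m2).le]
  calc jbr k ^ σ
      = (4 ^ σ * jbr k ^ σ * jbr m1 ^ σ * jbr m2 ^ σ) *
        (((4:ℝ) ^ σ)⁻¹ * (jbr m1 ^ σ)⁻¹ * (jbr m2 ^ σ)⁻¹) := by
        field_simp
    _ ≤ jbr m3 ^ σ * (((4:ℝ) ^ σ)⁻¹ * (jbr m1 ^ σ)⁻¹ * (jbr m2 ^ σ)⁻¹) := by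
        apply mul_le_mul_of_nonneg_right h3
        exact mul_nonneg (mul_nonneg (inv_nonneg.2 (Real.rpow_nonneg (by norm_num) _))
          (inv_nonneg.2 (Real.rpow_nonneg (jbr_pos m1).le _)))
          (inv_nonneg.2 (Real.rpow_nonneg (jbr_pos m2).le _))
    _ = ((4:ℝ) ^ σ)⁻¹ * (jbr m1 ^ σ)⁻¹ * (jbr m2 ^ σ)⁻¹ * jbr m3 ^ σ := by ring

/-- Trilinear product estimate at negative regularity (key estimate in the proof of
Theorem 1.2): for `s ≥ 0`, `2 ≤ p < ∞`, `σ = s + 1/p − 1/2 < 0`, `ε > 0` and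
`ρ = s + 3/2 + 1/p + ε`, there is `C > 0` such that for all `a ∈ h^ρ` and `c ∈ h^σ`,
the triple convolution `T_k = Σ_{k₁+k₂+k₃=k} a_{k₁} a_{k₂} c_{k₃}` converges absolutely
for every `k` and satisfies `‖T‖_{h^σ} ≤ C ‖a‖_{h^ρ}² ‖c‖_{h^σ}`. -/
theorem trilinear_product_estimate (s p ε : ℝ) (hs : 0 ≤ s) (hp : 2 ≤ p)
    (hσ : s + 1 / p - 1 / 2 < 0) (hε : 0 < ε) :
    ∃ C > 0, ∀ a c : ℤ → ℂ,
      Summable (fun k : ℤ => jbr k ^ (2 * (s + 3 / 2 + 1 / p + ε)) * ‖a k‖ ^ 2) →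
      Summable (fun k : ℤ => jbr k ^ (2 * (s + 1 / p - 1 / 2)) * ‖c k‖ ^ 2) →
      (∀ k : ℤ, Summable (fun m : ℤ × ℤ => ‖a m.1 * a m.2 * c (k - m.1 - m.2)‖)) ∧
      Summable (fun k : ℤ => jbr k ^ (2 * (s + 1 / p - 1 / 2)) *
        ‖∑' m : ℤ × ℤ, a m.1 * a m.2 * c (k - m.1 - m.2)‖ ^ 2) ∧
      hnorm (s + 1 / p - 1 / 2)
          (fun k => ∑' m : ℤ × ℤ, a m.1 * a m.2 * c (k - m.1 - m.2)) ≤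
        C * hnorm (s + 3 / 2 + 1 / p + ε) a ^ 2 * hnorm (s + 1 / p - 1 / 2) c := by
  have hp0 : (0:ℝ) < p := lt_of_lt_of_le two_pos hp
  set σ : ℝ := s + 1 / p - 1 / 2 with hσdef
  set ρ : ℝ := s + 3 / 2 + 1 / p + ε with hρdef
  have h40 : (0:ℝ) < (4:ℝ) ^ (-σ) := Real.rpow_pos_of_pos (by norm_num) _
  have hσρ : 1 < 2 * (σ + ρ) := by
    have h1p : 0 < 1 / p := by positivity
    rw [hσdef, hρdef]; nlinarith
  have hK2sum : Summable (fun j : ℤ => jbr j ^ (-(2 * (σ + ρ)))) := summable_jbr_rpow hσρ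
  set K2 : ℝ := ∑' j : ℤ, jbr j ^ (-(2 * (σ + ρ))) with hK2def
  have hK2nn : 0 ≤ K2 := tsum_nonneg fun j => Real.rpow_nonneg (jbr_pos j).le _
  refine ⟨(4:ℝ) ^ (-σ) * K2 + 1, by nlinarith [mul_nonneg h40.le hK2nn], ?_⟩
  intro a c ha hc
  set A : ℤ → ℝ := fun j => jbr j ^ (-σ) * ‖a j‖ with hAdef
  set Cc : ℤ → ℝ := fun j => jbr j ^ σ * ‖c j‖ with hCdef
  have hAnn : ∀ j, 0 ≤ A j := fun j =>
    mul_nonneg (Real.rpow_nonneg (jbr_pos j).le _) (norm_nonneg _)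
  have hCnn : ∀ j, 0 ≤ Cc j := fun j =>
    mul_nonneg (Real.rpow_nonneg (jbr_pos j).le _) (norm_nonneg _)
  have hCsq : ∀ j, Cc j ^ 2 = jbr j ^ (2 * σ) * ‖c j‖ ^ 2 := fun j => by
    rw [hCdef, mul_pow, jbr_rpow_sq]
  have hC2 : Summable (fun j => Cc j ^ 2) := hc.congr fun j => (hCsq j).symm
  set M : ℝ := ∑' j : ℤ, Cc j ^ 2 with hMdef
  have hMnn : 0 ≤ M := tsum_nonneg fun j => sq_nonneg _
  set NC : ℝ := Real.sqrt M with hNCdef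
  have hNCnn : 0 ≤ NC := Real.sqrt_nonneg _
  have hCb : ∀ j, Cc j ≤ NC := fun j => by
    have h := hC2.le_tsum j (fun i _ => sq_nonneg _)
    calc Cc j = Real.sqrt (Cc j ^ 2) := (Real.sqrt_sq (hCnn j)).symm
      _ ≤ Real.sqrt M := Real.sqrt_le_sqrt h
  set Na : ℝ := Real.sqrt (∑' k : ℤ, jbr k ^ (2 * ρ) * ‖a k‖ ^ 2) with hNadef
  have hNann : 0 ≤ Na := Real.sqrt_nonneg _
  -- ℓ¹ bound for A
  have hsumf : Summable (fun j : ℤ => (jbr j ^ (-(σ + ρ))) ^ 2) :=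
    hK2sum.congr fun j => by rw [jbr_rpow_sq, show 2 * -(σ + ρ) = -(2 * (σ + ρ)) by ring]
  have hsumg : Summable (fun j : ℤ => (jbr j ^ ρ * ‖a j‖) ^ 2) :=
    ha.congr fun j => by rw [mul_pow, jbr_rpow_sq]
  have hcsA := tsum_cs_s19 (fun j : ℤ => jbr j ^ (-(σ + ρ))) (fun j : ℤ => jbr j ^ ρ * ‖a j‖)
    (fun j => Real.rpow_nonneg (jbr_pos j).le _)
    (fun j => mul_nonneg (Real.rpow_nonneg (jbr_pos j).le _) (norm_nonneg _)) hsumf hsumg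
  have hAeq : ∀ j : ℤ, jbr j ^ (-(σ + ρ)) * (jbr j ^ ρ * ‖a j‖) = A j := fun j => by
    rw [hAdef, ← mul_assoc, ← Real.rpow_add (jbr_pos j), show -(σ + ρ) + ρ = -σ by ring]
  have hA : Summable A := hcsA.1.congr hAeq
  set KA : ℝ := ∑' j : ℤ, A j with hKAdef
  have hKAnn : 0 ≤ KA := tsum_nonneg hAnn
  have hKA : KA ≤ Real.sqrt K2 * Na := by
    have e1 : (∑' j : ℤ, jbr j ^ (-(σ + ρ)) * (jbr j ^ ρ * ‖a j‖)) = KA := tsum_congr hAeq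
    have e2 : (∑' j : ℤ, (jbr j ^ (-(σ + ρ))) ^ 2) = K2 := tsum_congr fun j => by
      rw [jbr_rpow_sq, show 2 * -(σ + ρ) = -(2 * (σ + ρ)) by ring]
    have e3 : (∑' j : ℤ, (jbr j ^ ρ * ‖a j‖) ^ 2) = ∑' k : ℤ, jbr k ^ (2 * ρ) * ‖a k‖ ^ 2 :=
      tsum_congr fun j => by rw [mul_pow, jbr_rpow_sq]
    have h := hcsA.2
    rw [e1, e2, e3] at h
    exact h
  have hKA2 : KA ^ 2 ≤ K2 * Na ^ 2 := by
    calc KA ^ 2 ≤ (Real.sqrt K2 * Na) ^ 2 := pow_le_pow_left₀ hKAnn hKA 2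
      _ = K2 * Na ^ 2 := by rw [mul_pow, Real.sq_sqrt hK2nn]
  -- key pointwise estimate
  have hkey : ∀ (k : ℤ) (m : ℤ × ℤ),
      jbr k ^ σ * ‖a m.1 * a m.2 * c (k - m.1 - m.2)‖ ≤
        (4:ℝ) ^ (-σ) * (A m.1 * A m.2 * Cc (k - m.1 - m.2)) := by
    intro k m
    have hb := jbr_key hσ.le k m.1 m.2
    have hn : ‖a m.1 * a m.2 * c (k - m.1 - m.2)‖
        = ‖a m.1‖ * ‖a m.2‖ * ‖c (k - m.1 - m.2)‖ := by simp [norm_mul]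
    rw [hn]
    calc jbr k ^ σ * (‖a m.1‖ * ‖a m.2‖ * ‖c (k - m.1 - m.2)‖)
        ≤ ((4:ℝ) ^ (-σ) * jbr m.1 ^ (-σ) * jbr m.2 ^ (-σ) * jbr (k - m.1 - m.2) ^ σ) *
          (‖a m.1‖ * ‖a m.2‖ * ‖c (k - m.1 - m.2)‖) := by
          apply mul_le_mul_of_nonneg_right hb
          exact mul_nonneg (mul_nonneg (norm_nonneg _) (norm_nonneg _)) (norm_nonneg _)
      _ = (4:ℝ) ^ (-σ) * (A m.1 * A m.2 * Cc (k - m.1 - m.2)) := by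
          rw [hAdef, hCdef]; ring
  have hAA : Summable (fun m : ℤ × ℤ => A m.1 * A m.2) :=
    hA.mul_of_nonneg hA hAnn hAnn
  have hAAsum : (∑' m : ℤ × ℤ, A m.1 * A m.2) = KA ^ 2 := by
    rw [hAA.tsum_prod' (fun b => hA.mul_left (A b))]
    simp_rw [tsum_mul_left]
    rw [tsum_mul_right, ← hKAdef, sq]
  -- summability of A*A*Cc over m, for each k
  have h1 : ∀ k : ℤ, Summable (fun m : ℤ × ℤ => A m.1 * A m.2 * Cc (k - m.1 - m.2)) := by
    intro k
    apply Summable.of_nonneg_of_le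
      (fun m => mul_nonneg (mul_nonneg (hAnn _) (hAnn _)) (hCnn _))
      (f := fun m : ℤ × ℤ => A m.1 * A m.2 * NC) _ (hAA.mul_right NC)
    intro m
    exact mul_le_mul_of_nonneg_left (hCb _) (mul_nonneg (hAnn _) (hAnn _))
  -- first conjunct
  have hconj1 : ∀ k : ℤ, Summable (fun m : ℤ × ℤ => ‖a m.1 * a m.2 * c (k - m.1 - m.2)‖) := by
    intro k
    have hpos : (0:ℝ) < jbr k ^ σ := Real.rpow_pos_of_pos (jbr_pos k) σ
    apply Summable.of_nonneg_of_le (fun m => norm_nonneg _)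
      (f := fun m : ℤ × ℤ => ((jbr k ^ σ)⁻¹ * (4:ℝ) ^ (-σ)) *
        (A m.1 * A m.2 * Cc (k - m.1 - m.2))) _ ((h1 k).mul_left _)
    intro m
    have h := hkey k m
    calc ‖a m.1 * a m.2 * c (k - m.1 - m.2)‖
        = (jbr k ^ σ)⁻¹ * (jbr k ^ σ * ‖a m.1 * a m.2 * c (k - m.1 - m.2)‖) := by
          field_simp
      _ ≤ (jbr k ^ σ)⁻¹ * ((4:ℝ) ^ (-σ) * (A m.1 * A m.2 * Cc (k - m.1 - m.2))) :=
          mul_le_mul_of_nonneg_left h (inv_nonneg.2 hpos.le)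
      _ = ((jbr k ^ σ)⁻¹ * (4:ℝ) ^ (-σ)) * (A m.1 * A m.2 * Cc (k - m.1 - m.2)) := by ring
  -- bound on weighted T
  have h2 : ∀ k : ℤ, jbr k ^ σ * ‖∑' m : ℤ × ℤ, a m.1 * a m.2 * c (k - m.1 - m.2)‖ ≤
      (4:ℝ) ^ (-σ) * ∑' m : ℤ × ℤ, A m.1 * A m.2 * Cc (k - m.1 - m.2) := by
    intro k
    have hpos : (0:ℝ) < jbr k ^ σ := Real.rpow_pos_of_pos (jbr_pos k) σ
    have hTle : ‖∑' m : ℤ × ℤ, a m.1 * a m.2 * c (k - m.1 - m.2)‖ ≤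
        ∑' m : ℤ × ℤ, ‖a m.1 * a m.2 * c (k - m.1 - m.2)‖ :=
      norm_tsum_le_tsum_norm (hconj1 k)
    calc jbr k ^ σ * ‖∑' m : ℤ × ℤ, a m.1 * a m.2 * c (k - m.1 - m.2)‖
        ≤ jbr k ^ σ * ∑' m : ℤ × ℤ, ‖a m.1 * a m.2 * c (k - m.1 - m.2)‖ :=
          mul_le_mul_of_nonneg_left hTle hpos.le
      _ = ∑' m : ℤ × ℤ, jbr k ^ σ * ‖a m.1 * a m.2 * c (k - m.1 - m.2)‖ := tsum_mul_left.symm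
      _ ≤ ∑' m : ℤ × ℤ, (4:ℝ) ^ (-σ) * (A m.1 * A m.2 * Cc (k - m.1 - m.2)) := by
          apply (((hconj1 k).mul_left _)).tsum_le_tsum (fun m => hkey k m) ((h1 k).mul_left _)
      _ = (4:ℝ) ^ (-σ) * ∑' m : ℤ × ℤ, A m.1 * A m.2 * Cc (k - m.1 - m.2) := tsum_mul_left
  -- shifted sums of Cc²
  have hCshift : ∀ t : ℤ, Summable (fun k : ℤ => Cc (k - t) ^ 2) ∧
      (∑' k : ℤ, Cc (k - t) ^ 2) = M := by
    intro t
    constructor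
    · exact ((Equiv.subRight t).summable_iff (f := fun j : ℤ => Cc j ^ 2)).2 hC2
    · exact (Equiv.subRight t).tsum_eq (fun j : ℤ => Cc j ^ 2)
  -- Fubini setup
  have hGnn : ∀ q : (ℤ × ℤ) × ℤ,
      0 ≤ A q.1.1 * A q.1.2 * Cc (q.2 - q.1.1 - q.1.2) ^ 2 := fun q =>
    mul_nonneg (mul_nonneg (hAnn _) (hAnn _)) (sq_nonneg _)
  have hGsum : ∀ m : ℤ × ℤ, (∑' k : ℤ, A m.1 * A m.2 * Cc (k - m.1 - m.2) ^ 2)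
      = A m.1 * A m.2 * M := by
    intro m
    rw [tsum_mul_left]
    congr 1
    rw [← (hCshift (m.1 + m.2)).2]
    exact tsum_congr fun k => by rw [sub_sub]
  have hGslice : ∀ m : ℤ × ℤ, Summable (fun k : ℤ => A m.1 * A m.2 * Cc (k - m.1 - m.2) ^ 2) := by
    intro m
    exact ((hCshift (m.1 + m.2)).1.mul_left (A m.1 * A m.2)).congr fun k => by rw [sub_sub]
  have hG : Summable (fun q : (ℤ × ℤ) × ℤ => A q.1.1 * A q.1.2 * Cc (q.2 - q.1.1 - q.1.2) ^ 2) := by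
    apply (summable_prod_of_nonneg hGnn).2
    exact ⟨hGslice, ((hAA.mul_right M).congr (fun m => (hGsum m).symm))⟩
  have hswap : Summable (fun q : ℤ × (ℤ × ℤ) =>
      A q.2.1 * A q.2.2 * Cc (q.1 - q.2.1 - q.2.2) ^ 2) :=
    ((Equiv.prodComm (ℤ × ℤ) ℤ).summable_iff
      (f := fun q : ℤ × (ℤ × ℤ) => A q.2.1 * A q.2.2 * Cc (q.1 - q.2.1 - q.2.2) ^ 2)).1 hG
  obtain ⟨hslice, hUsum⟩ := (summable_prod_of_nonneg (fun q => hGnn (q.2, q.1))).1 hswap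
  -- hUsum : Summable fun k => ∑' m, A m.1 * A m.2 * Cc (k - m.1 - m.2) ^ 2
  have hUnn : ∀ k : ℤ, 0 ≤ ∑' m : ℤ × ℤ, A m.1 * A m.2 * Cc (k - m.1 - m.2) ^ 2 := fun k =>
    tsum_nonneg fun m => hGnn (m, k)
  have hUtot : (∑' k : ℤ, ∑' m : ℤ × ℤ, A m.1 * A m.2 * Cc (k - m.1 - m.2) ^ 2)
      = KA ^ 2 * M := by
    have e1 : (∑' k : ℤ, ∑' m : ℤ × ℤ, A m.1 * A m.2 * Cc (k - m.1 - m.2) ^ 2)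
        = ∑' q : ℤ × (ℤ × ℤ), A q.2.1 * A q.2.2 * Cc (q.1 - q.2.1 - q.2.2) ^ 2 :=
      (hswap.tsum_prod' hslice).symm
    have e2 : (∑' q : ℤ × (ℤ × ℤ), A q.2.1 * A q.2.2 * Cc (q.1 - q.2.1 - q.2.2) ^ 2)
        = ∑' q : (ℤ × ℤ) × ℤ, A q.1.1 * A q.1.2 * Cc (q.2 - q.1.1 - q.1.2) ^ 2 :=
      ((Equiv.prodComm (ℤ × ℤ) ℤ).tsum_eq
        (fun q : ℤ × (ℤ × ℤ) => A q.2.1 * A q.2.2 * Cc (q.1 - q.2.1 - q.2.2) ^ 2)).symm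
    have e3 : (∑' q : (ℤ × ℤ) × ℤ, A q.1.1 * A q.1.2 * Cc (q.2 - q.1.1 - q.1.2) ^ 2)
        = KA ^ 2 * M := by
      rw [hG.tsum_prod' hGslice]
      calc (∑' m : ℤ × ℤ, ∑' k : ℤ, A m.1 * A m.2 * Cc (k - m.1 - m.2) ^ 2)
          = ∑' m : ℤ × ℤ, A m.1 * A m.2 * M := tsum_congr hGsum
        _ = (∑' m : ℤ × ℤ, A m.1 * A m.2) * M := tsum_mul_right
        _ = KA ^ 2 * M := by rw [hAAsum]
    rw [e1, e2, e3]
  -- per-k Cauchy-Schwarz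
  have hSk : ∀ k : ℤ, (∑' m : ℤ × ℤ, A m.1 * A m.2 * Cc (k - m.1 - m.2)) ≤
      KA * Real.sqrt (∑' m : ℤ × ℤ, A m.1 * A m.2 * Cc (k - m.1 - m.2) ^ 2) := by
    intro k
    have hf0 : ∀ m : ℤ × ℤ, 0 ≤ Real.sqrt (A m.1 * A m.2) := fun m => Real.sqrt_nonneg _
    have hg0 : ∀ m : ℤ × ℤ, 0 ≤ Real.sqrt (A m.1 * A m.2) * Cc (k - m.1 - m.2) := fun m =>
      mul_nonneg (Real.sqrt_nonneg _) (hCnn _)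
    have hAAnn : ∀ m : ℤ × ℤ, 0 ≤ A m.1 * A m.2 := fun m => mul_nonneg (hAnn _) (hAnn _)
    have hfsq : ∀ m : ℤ × ℤ, Real.sqrt (A m.1 * A m.2) ^ 2 = A m.1 * A m.2 := fun m =>
      Real.sq_sqrt (hAAnn m)
    have hgsq : ∀ m : ℤ × ℤ, (Real.sqrt (A m.1 * A m.2) * Cc (k - m.1 - m.2)) ^ 2
        = A m.1 * A m.2 * Cc (k - m.1 - m.2) ^ 2 := fun m => by
      rw [mul_pow, hfsq m]
    have hfg : ∀ m : ℤ × ℤ, Real.sqrt (A m.1 * A m.2) *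
        (Real.sqrt (A m.1 * A m.2) * Cc (k - m.1 - m.2))
        = A m.1 * A m.2 * Cc (k - m.1 - m.2) := fun m => by
      rw [← mul_assoc, Real.mul_self_sqrt (hAAnn m)]
    have hcs := tsum_cs_s19 (fun m : ℤ × ℤ => Real.sqrt (A m.1 * A m.2))
      (fun m : ℤ × ℤ => Real.sqrt (A m.1 * A m.2) * Cc (k - m.1 - m.2)) hf0 hg0
      (hAA.congr fun m => (hfsq m).symm) ((hslice k).congr fun m => (hgsq m).symm)
    have h := hcs.2
    rw [tsum_congr hfg, tsum_congr hfsq, tsum_congr hgsq, hAAsum,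
      Real.sqrt_sq hKAnn] at h
    exact h
  -- final assembly
  have hsq : ∀ k : ℤ, jbr k ^ (2 * σ) *
      ‖∑' m : ℤ × ℤ, a m.1 * a m.2 * c (k - m.1 - m.2)‖ ^ 2 ≤
      (((4:ℝ) ^ (-σ)) ^ 2 * KA ^ 2) *
        ∑' m : ℤ × ℤ, A m.1 * A m.2 * Cc (k - m.1 - m.2) ^ 2 := by
    intro k
    have h := (h2 k).trans (mul_le_mul_of_nonneg_left (hSk k) h40.le)
    have hLnn : 0 ≤ jbr k ^ σ * ‖∑' m : ℤ × ℤ, a m.1 * a m.2 * c (k - m.1 - m.2)‖ :=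
      mul_nonneg (Real.rpow_nonneg (jbr_pos k).le _) (norm_nonneg _)
    calc jbr k ^ (2 * σ) * ‖∑' m : ℤ × ℤ, a m.1 * a m.2 * c (k - m.1 - m.2)‖ ^ 2
        = (jbr k ^ σ * ‖∑' m : ℤ × ℤ, a m.1 * a m.2 * c (k - m.1 - m.2)‖) ^ 2 := by
          rw [mul_pow, jbr_rpow_sq]
      _ ≤ ((4:ℝ) ^ (-σ) * (KA *
          Real.sqrt (∑' m : ℤ × ℤ, A m.1 * A m.2 * Cc (k - m.1 - m.2) ^ 2))) ^ 2 :=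
          pow_le_pow_left₀ hLnn h 2
      _ = (((4:ℝ) ^ (-σ)) ^ 2 * KA ^ 2) *
          ∑' m : ℤ × ℤ, A m.1 * A m.2 * Cc (k - m.1 - m.2) ^ 2 := by
          rw [mul_pow, mul_pow, Real.sq_sqrt (hUnn k)]; ring
  have hconj2 : Summable (fun k : ℤ => jbr k ^ (2 * σ) *
      ‖∑' m : ℤ × ℤ, a m.1 * a m.2 * c (k - m.1 - m.2)‖ ^ 2) := by
    apply Summable.of_nonneg_of_le
      (fun k => mul_nonneg (Real.rpow_nonneg (jbr_pos k).le _) (sq_nonneg _)) hsq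
    exact (hUsum.mul_left ((((4:ℝ) ^ (-σ)) ^ 2 * KA ^ 2))).congr fun k => rfl
  refine ⟨hconj1, hconj2, ?_⟩
  have hSTle : (∑' k : ℤ, jbr k ^ (2 * σ) *
      ‖∑' m : ℤ × ℤ, a m.1 * a m.2 * c (k - m.1 - m.2)‖ ^ 2)
      ≤ (((4:ℝ) ^ (-σ)) ^ 2 * KA ^ 2) * (KA ^ 2 * M) := by
    calc (∑' k : ℤ, jbr k ^ (2 * σ) *
        ‖∑' m : ℤ × ℤ, a m.1 * a m.2 * c (k - m.1 - m.2)‖ ^ 2)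
        ≤ ∑' k : ℤ, (((4:ℝ) ^ (-σ)) ^ 2 * KA ^ 2) *
            ∑' m : ℤ × ℤ, A m.1 * A m.2 * Cc (k - m.1 - m.2) ^ 2 :=
          hconj2.tsum_le_tsum hsq
            ((hUsum.mul_left ((((4:ℝ) ^ (-σ)) ^ 2 * KA ^ 2))).congr fun k => rfl)
      _ = (((4:ℝ) ^ (-σ)) ^ 2 * KA ^ 2) *
            ∑' k : ℤ, ∑' m : ℤ × ℤ, A m.1 * A m.2 * Cc (k - m.1 - m.2) ^ 2 := tsum_mul_left
      _ = (((4:ℝ) ^ (-σ)) ^ 2 * KA ^ 2) * (KA ^ 2 * M) := by rw [hUtot]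
  simp only [hnorm]
  rw [← Real.sqrt_eq_rpow, ← Real.sqrt_eq_rpow, ← Real.sqrt_eq_rpow, ← hNadef]
  have hMc : (∑' k : ℤ, jbr k ^ (2 * σ) * ‖c k‖ ^ 2) = M := (tsum_congr hCsq).symm
  rw [hMc, ← hNCdef]
  calc Real.sqrt (∑' k : ℤ, jbr k ^ (2 * σ) *
        ‖∑' m : ℤ × ℤ, a m.1 * a m.2 * c (k - m.1 - m.2)‖ ^ 2)
      ≤ Real.sqrt ((((4:ℝ) ^ (-σ)) ^ 2 * KA ^ 2) * (KA ^ 2 * M)) := Real.sqrt_le_sqrt hSTle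
    _ = ((4:ℝ) ^ (-σ) * KA ^ 2) * NC := by
        rw [show ((((4:ℝ) ^ (-σ)) ^ 2 * KA ^ 2) * (KA ^ 2 * M))
            = ((4:ℝ) ^ (-σ) * KA ^ 2) ^ 2 * M by ring,
          Real.sqrt_mul (sq_nonneg _), Real.sqrt_sq (mul_nonneg h40.le (sq_nonneg KA)), hNCdef]
    _ ≤ ((4:ℝ) ^ (-σ) * (K2 * Na ^ 2)) * NC :=
        mul_le_mul_of_nonneg_right (mul_le_mul_of_nonneg_left hKA2 h40.le) hNCnn
    _ ≤ ((4:ℝ) ^ (-σ) * K2 + 1) * Na ^ 2 * NC := by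
        nlinarith [mul_nonneg (sq_nonneg Na) hNCnn]
end
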